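/- arXiv:1701.04738 — 5 statements merged into one kernel-verified Lean document; each statement's English description precedes it below -/
import Mathlib

section
/- Let S be a finite subset of ℕ² and let m ≥ 1 be an integer. The only polynomial supported on S that vanishes to order ≥ m at (1,1) is the zero polynomial, if and only if for every point (i,j) ∈ S there exists a polynomial f ∈ ℚ[x,y] of total degree ≤ m−1 such that f(i,j) ≠ 0 and f(i',j') = 0 for all (i',j') ∈ S with (i',j') ≠ (i,j). -/
/-- The polynomial `∑_{(i,j) ∈ S} a_{ij} x^i y^j` supported on the finite set
`S ⊆ ℕ²`, with coefficients `a`. -/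
noncomputable def polyOf (S : Finset (ℕ × ℕ)) (a : ℕ × ℕ → ℚ) : MvPolynomial (Fin 2) ℚ :=
  ∑ p ∈ S, MvPolynomial.C (a p) * MvPolynomial.X 0 ^ p.1 * MvPolynomial.X 1 ^ p.2

/-- `f` vanishes to order `≥ m` at the point `(1,1)`:
`(∂ₓᵘ ∂ᵧᵛ f)(1,1) = 0` for all `u + v ≤ m - 1`. -/
def vanishesToOrder (m : ℕ) (f : MvPolynomial (Fin 2) ℚ) : Prop :=
  ∀ u v : ℕ, u + v ≤ m - 1 →
    MvPolynomial.eval (fun _ => (1 : ℚ))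
      ((fun g => MvPolynomial.pderiv (0 : Fin 2) g)^[u]
        ((fun g => MvPolynomial.pderiv (1 : Fin 2) g)^[v] f)) = 0

open MvPolynomial Finset

lemma descFac_cast (n k : ℕ) :
    (n.descFactorial k : ℚ) = ∏ i ∈ Finset.range k, ((n : ℚ) - i) := by
  induction k with
  | zero => simp
  | succ k ih =>
    rw [Nat.descFactorial_succ, Finset.prod_range_succ, ← ih]
    rcases le_or_gt k n with h | h
    · push_cast [h]; ring
    · rw [Nat.descFactorial_eq_zero_iff_lt.2 h, Nat.sub_eq_zero_of_le h.le]
      simp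

lemma pderiv1_term (c : ℚ) (i j : ℕ) :
    MvPolynomial.pderiv (1 : Fin 2) (C c * X 0 ^ i * X 1 ^ j)
      = C (c * j) * X 0 ^ i * X 1 ^ (j - 1) := by
  simp [pderiv_mul, pderiv_pow, pderiv_X, Pi.single_apply]
  ring_nf

lemma pderiv0_term (c : ℚ) (i j : ℕ) :
    MvPolynomial.pderiv (0 : Fin 2) (C c * X 0 ^ i * X 1 ^ j)
      = C (c * i) * X 0 ^ (i - 1) * X 1 ^ j := by
  simp [pderiv_mul, pderiv_pow, pderiv_X, Pi.single_apply]
  ring_nf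

lemma pderiv1_iter_term (v : ℕ) : ∀ (c : ℚ) (i j : ℕ),
    (fun g => MvPolynomial.pderiv (1 : Fin 2) g)^[v] (C c * X 0 ^ i * X 1 ^ j)
      = C (c * j.descFactorial v) * X 0 ^ i * X 1 ^ (j - v) := by
  induction v with
  | zero => intro c i j; simp
  | succ v ih =>
    intro c i j
    rw [Function.iterate_succ_apply, pderiv1_term, ih, Nat.sub_sub, Nat.add_comm 1 v]
    congr 2
    cases j with
    | zero => simp
    | succ n =>
      rw [Nat.succ_descFactorial_succ, Nat.succ_sub_one]
      push_cast; ring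

lemma pderiv0_iter_term (u : ℕ) : ∀ (c : ℚ) (i j : ℕ),
    (fun g => MvPolynomial.pderiv (0 : Fin 2) g)^[u] (C c * X 0 ^ i * X 1 ^ j)
      = C (c * i.descFactorial u) * X 0 ^ (i - u) * X 1 ^ j := by
  induction u with
  | zero => intro c i j; simp
  | succ u ih =>
    intro c i j
    rw [Function.iterate_succ_apply, pderiv0_term, ih, Nat.sub_sub, Nat.add_comm 1 u]
    congr 2
    cases i with
    | zero => simp
    | succ n =>
      rw [Nat.succ_descFactorial_succ, Nat.succ_sub_one]
      push_cast; ring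

lemma iter_additive (s : Fin 2) (v : ℕ) (F : Finset (ℕ × ℕ)) (g : ℕ × ℕ → MvPolynomial (Fin 2) ℚ) :
    (fun g => MvPolynomial.pderiv s g)^[v] (∑ p ∈ F, g p)
      = ∑ p ∈ F, (fun g => MvPolynomial.pderiv s g)^[v] (g p) := by
  induction v with
  | zero => simp
  | succ v ih => simp only [Function.iterate_succ_apply', ih]
                 exact map_sum (MvPolynomial.pderiv s) _ _

lemma eval_deriv (S : Finset (ℕ × ℕ)) (a : ℕ × ℕ → ℚ) (u v : ℕ) :
    MvPolynomial.eval (fun _ => (1 : ℚ))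
      ((fun g => MvPolynomial.pderiv (0 : Fin 2) g)^[u]
        ((fun g => MvPolynomial.pderiv (1 : Fin 2) g)^[v]
          (∑ p ∈ S, MvPolynomial.C (a p) * MvPolynomial.X 0 ^ p.1 * MvPolynomial.X 1 ^ p.2)))
      = ∑ p ∈ S, a p * (p.1.descFactorial u : ℚ) * (p.2.descFactorial v : ℚ) := by
  rw [iter_additive, iter_additive, map_sum]
  refine Finset.sum_congr rfl fun p _ => ?_
  rw [pderiv1_iter_term, pderiv0_iter_term]
  simp [mul_comm, mul_assoc, mul_left_comm]

noncomputable def mulX : (ℕ → ℚ) →ₗ[ℚ] (ℕ → ℚ) where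
  toFun g := fun x => (x : ℚ) * g x
  map_add' g h := by funext x; simp [mul_add]
  map_smul' c g := by funext x; simp [mul_left_comm]

def dfF (k : ℕ) : ℕ → ℚ := fun x => (x.descFactorial k : ℚ)
def pwF (k : ℕ) : ℕ → ℚ := fun x => (x : ℚ) ^ k

lemma mulX_dfF (k : ℕ) : mulX (dfF k) = dfF (k + 1) + (k : ℚ) • dfF k := by
  funext x
  simp only [mulX, LinearMap.coe_mk, AddHom.coe_mk, dfF, Pi.add_apply, Pi.smul_apply,
    smul_eq_mul, descFac_cast, Finset.prod_range_succ]
  ring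

lemma mulX_pwF (k : ℕ) : mulX (pwF k) = pwF (k + 1) := by
  funext x; simp [mulX, pwF, pow_succ]; ring

lemma pwF_mem (u : ℕ) : pwF u ∈ Submodule.span ℚ {g | ∃ k ≤ u, g = dfF k} := by
  induction u with
  | zero =>
    apply Submodule.subset_span
    exact ⟨0, le_rfl, by funext x; simp [pwF, dfF]⟩
  | succ u ih =>
    have h1 : pwF (u + 1) = mulX (pwF u) := (mulX_pwF u).symm
    rw [h1]
    have : mulX (pwF u) ∈ Submodule.map mulX (Submodule.span ℚ {g | ∃ k ≤ u, g = dfF k}) :=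
      Submodule.mem_map_of_mem ih
    rw [Submodule.map_span] at this
    refine Submodule.span_le.2 ?_ this
    rintro _ ⟨g, ⟨k, hk, rfl⟩, rfl⟩
    rw [mulX_dfF]
    exact add_mem (Submodule.subset_span ⟨k + 1, by omega, rfl⟩)
      (Submodule.smul_mem _ _ (Submodule.subset_span ⟨k, by omega, rfl⟩))

lemma dfF_mem (u : ℕ) : dfF u ∈ Submodule.span ℚ {g | ∃ k ≤ u, g = pwF k} := by
  induction u with
  | zero =>
    apply Submodule.subset_span
    exact ⟨0, le_rfl, by funext x; simp [pwF, dfF]⟩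
  | succ u ih =>
    have h1 : dfF (u + 1) = mulX (dfF u) - (u : ℚ) • dfF u := by
      rw [mulX_dfF]; abel
    rw [h1]
    have hsm : (u : ℚ) • dfF u ∈ Submodule.span ℚ {g | ∃ k ≤ u + 1, g = pwF k} := by
      refine Submodule.smul_mem _ _ ?_
      refine Submodule.span_le.2 ?_ ih
      exact fun g ⟨k, hk, hg⟩ => Submodule.subset_span ⟨k, by omega, hg⟩
    have hmx : mulX (dfF u) ∈ Submodule.span ℚ {g | ∃ k ≤ u + 1, g = pwF k} := by
      have : mulX (dfF u) ∈ Submodule.map mulX (Submodule.span ℚ {g | ∃ k ≤ u, g = pwF k}) :=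
        Submodule.mem_map_of_mem ih
      rw [Submodule.map_span] at this
      refine Submodule.span_le.2 ?_ this
      rintro _ ⟨g, ⟨k, hk, rfl⟩, rfl⟩
      rw [mulX_pwF]
      exact Submodule.subset_span ⟨k + 1, by omega, rfl⟩
    exact sub_mem hmx hsm

noncomputable def Phi (S : Finset (ℕ × ℕ)) (a : ℕ × ℕ → ℚ) :
    (ℕ → ℚ) →ₗ[ℚ] (ℕ → ℚ) →ₗ[ℚ] ℚ :=
  LinearMap.mk₂ ℚ (fun g h => ∑ p ∈ S, a p * g p.1 * h p.2)
    (fun g g' h => by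
      rw [← Finset.sum_add_distrib]; exact Finset.sum_congr rfl fun p _ => by simp; ring)
    (fun c g h => by
      simp only [smul_eq_mul, Finset.mul_sum]
      exact Finset.sum_congr rfl fun p _ => by simp; ring)
    (fun g h h' => by
      rw [← Finset.sum_add_distrib]; exact Finset.sum_congr rfl fun p _ => by simp; ring)
    (fun c g h => by
      simp only [smul_eq_mul, Finset.mul_sum]
      exact Finset.sum_congr rfl fun p _ => by simp; ring)

lemma Phi_zero {S : Finset (ℕ × ℕ)} {a : ℕ × ℕ → ℚ} {A B : Set (ℕ → ℚ)}
    {g h : ℕ → ℚ} (hg : g ∈ Submodule.span ℚ A) (hh : h ∈ Submodule.span ℚ B)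
    (H : ∀ g' ∈ A, ∀ h' ∈ B, Phi S a g' h' = 0) : Phi S a g h = 0 := by
  induction hg using Submodule.span_induction with
  | mem g' hg' =>
    induction hh using Submodule.span_induction with
    | mem h' hh' => exact H g' hg' h' hh'
    | zero => simp
    | add x y _ _ hx hy => rw [map_add, hx, hy, add_zero]
    | smul c x _ hx => rw [map_smul, hx, smul_zero]
  | zero => simp
  | add x y _ _ hx hy => rw [map_add, LinearMap.add_apply, hx, hy, add_zero]
  | smul c x _ hx => rw [map_smul, LinearMap.smul_apply, hx, smul_zero]

lemma Phi_apply (S : Finset (ℕ × ℕ)) (a : ℕ × ℕ → ℚ) (g h : ℕ → ℚ) :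
    Phi S a g h = ∑ p ∈ S, a p * g p.1 * h p.2 := rfl

lemma van_iff (S : Finset (ℕ × ℕ)) (a : ℕ × ℕ → ℚ) (m : ℕ) :
    vanishesToOrder m (polyOf S a) ↔
      ∀ u v : ℕ, u + v ≤ m - 1 → ∑ p ∈ S, a p * (p.1 : ℚ) ^ u * (p.2 : ℚ) ^ v = 0 := by
  have hv : vanishesToOrder m (polyOf S a) ↔
      ∀ u v : ℕ, u + v ≤ m - 1 → Phi S a (dfF u) (dfF v) = 0 := by
    unfold vanishesToOrder polyOf
    constructor
    · intro H u v huv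
      rw [Phi_apply]
      simp only [dfF]
      rw [← eval_deriv S a u v]
      exact H u v huv
    · intro H u v huv
      rw [eval_deriv S a u v]
      have := H u v huv
      rw [Phi_apply] at this
      simpa [dfF] using this
  rw [hv]
  constructor
  · intro H u v huv
    have : Phi S a (pwF u) (pwF v) = 0 := by
      refine Phi_zero (pwF_mem u) (pwF_mem v) ?_
      rintro _ ⟨k, hk, rfl⟩ _ ⟨l, hl, rfl⟩
      exact H k l (by omega)
    rw [Phi_apply] at this
    simpa [pwF] using this
  · intro H u v huv
    refine Phi_zero (dfF_mem u) (dfF_mem v) ?_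
    rintro _ ⟨k, hk, rfl⟩ _ ⟨l, hl, rfl⟩
    rw [Phi_apply]
    simpa [pwF] using H k l (by omega)

lemma eval_expand (f : MvPolynomial (Fin 2) ℚ) (i j : ℕ) :
    MvPolynomial.eval ![(i : ℚ), (j : ℚ)] f
      = ∑ d ∈ f.support, MvPolynomial.coeff d f * (i : ℚ) ^ (d 0) * (j : ℚ) ^ (d 1) := by
  conv_lhs => rw [f.as_sum]
  rw [map_sum]
  refine Finset.sum_congr rfl fun d _ => ?_
  rw [MvPolynomial.eval_monomial]
  rw [Finsupp.prod_fintype _ _ (fun s => pow_zero _)]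
  rw [Fin.prod_univ_two]
  simp [mul_assoc]

lemma pow_iff_eval (S : Finset (ℕ × ℕ)) (a : ℕ × ℕ → ℚ) (n : ℕ) :
    (∀ u v : ℕ, u + v ≤ n → ∑ p ∈ S, a p * (p.1 : ℚ) ^ u * (p.2 : ℚ) ^ v = 0) ↔
      (∀ f : MvPolynomial (Fin 2) ℚ, f.totalDegree ≤ n →
        ∑ p ∈ S, a p * MvPolynomial.eval ![(p.1 : ℚ), (p.2 : ℚ)] f = 0) := by
  constructor
  · intro H f hf
    calc ∑ p ∈ S, a p * MvPolynomial.eval ![(p.1 : ℚ), (p.2 : ℚ)] f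
        = ∑ p ∈ S, ∑ d ∈ f.support,
            MvPolynomial.coeff d f * (a p * (p.1 : ℚ) ^ (d 0) * (p.2 : ℚ) ^ (d 1)) := by
          refine Finset.sum_congr rfl fun p _ => ?_
          rw [eval_expand, Finset.mul_sum]
          exact Finset.sum_congr rfl fun d _ => by ring
      _ = ∑ d ∈ f.support, ∑ p ∈ S,
            MvPolynomial.coeff d f * (a p * (p.1 : ℚ) ^ (d 0) * (p.2 : ℚ) ^ (d 1)) :=
          Finset.sum_comm
      _ = 0 := by
          refine Finset.sum_eq_zero fun d hd => ?_
          have hled := MvPolynomial.le_totalDegree hd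
          have hsum : (d.sum fun _ e => e) = d 0 + d 1 := by
            rw [Finsupp.sum_fintype _ _ fun _ => rfl, Fin.sum_univ_two]
          rw [← Finset.mul_sum, H (d 0) (d 1) (by omega), mul_zero]
  · intro H u v huv
    have := H (X 0 ^ u * X 1 ^ v) ?deg
    case deg =>
      calc (X 0 ^ u * X (1:Fin 2) ^ v : MvPolynomial (Fin 2) ℚ).totalDegree
          ≤ (X 0 ^ u : MvPolynomial (Fin 2) ℚ).totalDegree
              + (X 1 ^ v : MvPolynomial (Fin 2) ℚ).totalDegree :=
            MvPolynomial.totalDegree_mul _ _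
        _ ≤ u * 1 + v * 1 := by
            gcongr <;> simpa using MvPolynomial.totalDegree_pow _ _
        _ ≤ n := by omega
    simpa [mul_assoc] using this

lemma term_eq_monomial (c : ℚ) (i j : ℕ) :
    (C c * X 0 ^ i * X 1 ^ j : MvPolynomial (Fin 2) ℚ)
      = MvPolynomial.monomial (Finsupp.single 0 i + Finsupp.single 1 j) c := by
  rw [MvPolynomial.X_pow_eq_monomial, MvPolynomial.X_pow_eq_monomial,
    MvPolynomial.C_apply, MvPolynomial.monomial_mul, MvPolynomial.monomial_mul]
  simp [add_assoc]

lemma expmap_inj : Function.Injective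
    (fun p : ℕ × ℕ => (Finsupp.single (0 : Fin 2) p.1 + Finsupp.single 1 p.2)) := by
  intro p q h
  have h0 := DFunLike.congr_fun h (0 : Fin 2)
  have h1 := DFunLike.congr_fun h (1 : Fin 2)
  simp [Finsupp.add_apply, Finsupp.single_apply] at h0 h1
  exact Prod.ext h0 h1

lemma polyOf_eq_zero_iff (S : Finset (ℕ × ℕ)) (a : ℕ × ℕ → ℚ) :
    polyOf S a = 0 ↔ ∀ p ∈ S, a p = 0 := by
  constructor
  · intro h p hp
    have := congrArg (MvPolynomial.coeff (Finsupp.single 0 p.1 + Finsupp.single 1 p.2)) h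
    rw [MvPolynomial.coeff_zero] at this
    unfold polyOf at this
    rw [← this]
    rw [MvPolynomial.coeff_sum]
    rw [Finset.sum_eq_single_of_mem p hp]
    · rw [term_eq_monomial, MvPolynomial.coeff_monomial, if_pos rfl]
    · intro q hq hqp
      rw [term_eq_monomial, MvPolynomial.coeff_monomial, if_neg]
      exact fun hc => hqp (expmap_inj hc)
  · intro h
    unfold polyOf
    refine Finset.sum_eq_zero fun p hp => ?_
    rw [h p hp]
    simp

noncomputable def evalMap (S : Finset (ℕ × ℕ)) : MvPolynomial (Fin 2) ℚ →ₗ[ℚ] (↥S → ℚ) :=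
  LinearMap.pi fun q => (MvPolynomial.aeval ![((q : ℕ × ℕ).1 : ℚ), ((q : ℕ × ℕ).2 : ℚ)]).toLinearMap

lemma evalMap_apply (S : Finset (ℕ × ℕ)) (f : MvPolynomial (Fin 2) ℚ) (q : ↥S) :
    evalMap S f q = MvPolynomial.eval ![((q : ℕ × ℕ).1 : ℚ), ((q : ℕ × ℕ).2 : ℚ)] f := by
  rfl

lemma phi_eq_sum (S : Finset (ℕ × ℕ)) (φ : Module.Dual ℚ (↥S → ℚ)) (y : ↥S → ℚ) :
    φ y = ∑ q ∈ S.attach, y q * φ (Pi.single q (1 : ℚ)) := by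
  conv_lhs => rw [← Finset.univ_sum_single y]
  rw [map_sum, ← Finset.univ_eq_attach]
  refine Finset.sum_congr rfl fun q _ => ?_
  have : Pi.single q (y q) = (y q) • (Pi.single q (1 : ℚ) : ↥S → ℚ) := by
    funext r
    by_cases h : r = q
    · subst h; simp
    · simp [Pi.single_eq_of_ne h]
  rw [this, map_smul, smul_eq_mul]

lemma single_mem_evalMap_image (S : Finset (ℕ × ℕ)) (n : ℕ)
    (hdual : ∀ a : ℕ × ℕ → ℚ,
      (∀ f : MvPolynomial (Fin 2) ℚ, f.totalDegree ≤ n →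
        ∑ r ∈ S, a r * MvPolynomial.eval ![(r.1 : ℚ), (r.2 : ℚ)] f = 0) →
      ∀ r ∈ S, a r = 0)
    (p : ℕ × ℕ) (hp : p ∈ S) :
    (Pi.single (⟨p, hp⟩ : ↥S) (1 : ℚ) : ↥S → ℚ)
      ∈ Submodule.map (evalMap S) (MvPolynomial.restrictTotalDegree (Fin 2) ℚ n) := by
  by_contra hnm
  obtain ⟨φ, hφx, hmap⟩ := Submodule.exists_dual_map_eq_bot_of_notMem hnm inferInstance
  have hker : ∀ w ∈ Submodule.map (evalMap S) (MvPolynomial.restrictTotalDegree (Fin 2) ℚ n),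
      φ w = 0 := by
    intro w hw
    have h2 : φ w ∈ Submodule.map φ
        (Submodule.map (evalMap S) (MvPolynomial.restrictTotalDegree (Fin 2) ℚ n)) :=
      Submodule.mem_map_of_mem hw
    rw [hmap] at h2
    simpa using h2
  set a : ℕ × ℕ → ℚ := fun r => if h : r ∈ S then φ (Pi.single (⟨r, h⟩ : ↥S) (1 : ℚ)) else 0
    with ha
  have haval : ∀ x : ↥S, a x = φ (Pi.single x (1 : ℚ)) := by
    intro x
    rw [ha]
    simp only [x.2, dif_pos]
  have hA : ∀ f : MvPolynomial (Fin 2) ℚ, f.totalDegree ≤ n →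
      ∑ r ∈ S, a r * MvPolynomial.eval ![(r.1 : ℚ), (r.2 : ℚ)] f = 0 := by
    intro f hf
    rw [← Finset.sum_attach S (fun r => a r * MvPolynomial.eval ![(r.1 : ℚ), (r.2 : ℚ)] f)]
    have : ∑ x ∈ S.attach, a x * MvPolynomial.eval ![((x : ℕ × ℕ).1 : ℚ), ((x : ℕ × ℕ).2 : ℚ)] f
        = ∑ x ∈ S.attach, (evalMap S f) x * φ (Pi.single x (1 : ℚ)) := by
      refine Finset.sum_congr rfl fun x _ => ?_
      rw [haval x, evalMap_apply, mul_comm]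
    rw [this, ← phi_eq_sum]
    exact hker _ (Submodule.mem_map_of_mem ((MvPolynomial.mem_restrictTotalDegree _ _ _).2 hf))
  have := hdual a hA p hp
  rw [haval ⟨p, hp⟩] at this
  exact hφx this


/-- the only polynomial supported on `S` vanishing to order `≥ m`
at `(1,1)` is the zero polynomial, iff every point of `S` can be separated from
the remaining points of `S` by a polynomial of total degree at most `m - 1`. -/
theorem only_zero_vanishes_iff_interpolation (S : Finset (ℕ × ℕ)) (m : ℕ) (hm : 1 ≤ m) :
    (∀ a : ℕ × ℕ → ℚ, vanishesToOrder m (polyOf S a) → polyOf S a = 0) ↔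
      ∀ p ∈ S, ∃ f : MvPolynomial (Fin 2) ℚ, f.totalDegree ≤ m - 1 ∧
        MvPolynomial.eval ![(p.1 : ℚ), (p.2 : ℚ)] f ≠ 0 ∧
        ∀ q ∈ S, q ≠ p → MvPolynomial.eval ![(q.1 : ℚ), (q.2 : ℚ)] f = 0 := by
  constructor
  · intro H p hp
    have hd : ∀ a : ℕ × ℕ → ℚ,
        (∀ f : MvPolynomial (Fin 2) ℚ, f.totalDegree ≤ m - 1 →
          ∑ r ∈ S, a r * MvPolynomial.eval ![(r.1 : ℚ), (r.2 : ℚ)] f = 0) →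
        ∀ r ∈ S, a r = 0 := by
      intro a hA
      have hvan : vanishesToOrder m (polyOf S a) :=
        (van_iff S a m).2 ((pow_iff_eval S a (m - 1)).2 hA)
      exact (polyOf_eq_zero_iff S a).1 (H a hvan)
    obtain ⟨g, hg, hEg⟩ := single_mem_evalMap_image S (m - 1) hd p hp
    refine ⟨g, (MvPolynomial.mem_restrictTotalDegree _ _ _).1 hg, ?_, ?_⟩
    · have := congrFun hEg (⟨p, hp⟩ : ↥S)
      rw [evalMap_apply] at this
      rw [this]
      simp
    · intro q hq hqp
      have := congrFun hEg (⟨q, hq⟩ : ↥S)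
      rw [evalMap_apply] at this
      rw [this]
      exact Pi.single_eq_of_ne (fun h => hqp (congrArg Subtype.val h)) _
  · intro H a hvan
    rw [polyOf_eq_zero_iff]
    intro p hp
    obtain ⟨f, hf, hfp, hfq⟩ := H p hp
    have h0 := (pow_iff_eval S a (m - 1)).1 ((van_iff S a m).1 hvan) f hf
    rw [Finset.sum_eq_single_of_mem p hp
      (fun q hq hqp => by rw [hfq q hq hqp, mul_zero])] at h0
    exact (mul_eq_zero.1 h0).resolve_right hfp
end

section
/- Let S be a finite subset of ℕ², let m ≥ 1 be an integer, and fix a point (i₀,j₀) ∈ S. The following are equivalent: (a) every polynomial f = ∑_{(i,j)∈S} a_{ij} x^i y^j supported on S that vanishes to order ≥ m at (1,1) has a_{i₀j₀} = 0; (b) there exists a polynomial g ∈ ℚ[x,y] of total degree ≤ m−1 such that g(i₀,j₀) ≠ 0 and g(i,j) = 0 for all (i,j) ∈ S with (i,j) ≠ (i₀,j₀). -/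
open MvPolynomial Finset

private noncomputable def pd (s : Fin 2) : MvPolynomial (Fin 2) ℚ →ₗ[ℚ] MvPolynomial (Fin 2) ℚ :=
  (pderiv s).toLinearMap

private lemma pd_iterate (s : Fin 2) (u : ℕ) (f : MvPolynomial (Fin 2) ℚ) :
    (fun g => pderiv s g)^[u] f = ((pd s) ^ u) f := by
  rw [Module.End.pow_apply]; rfl

private lemma iter_pderiv_pow (s : Fin 2) (u n : ℕ) :
    ((pd s) ^ u) ((X s : MvPolynomial (Fin 2) ℚ) ^ n) =
      (n.descFactorial u : ℚ) • ((X s : MvPolynomial (Fin 2) ℚ) ^ (n - u)) := by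
  induction u generalizing n with
  | zero => simp
  | succ u ih =>
    rw [pow_succ, Module.End.mul_apply]
    have h1 : pd s ((X s : MvPolynomial (Fin 2) ℚ) ^ n) = (n : ℚ) • X s ^ (n - 1) := by
      show pderiv s _ = _
      rw [pderiv_pow, pderiv_X_self, mul_one, smul_eq_C_mul]
      norm_cast
    rw [h1, map_smul, ih, smul_smul]
    cases n with
    | zero => simp
    | succ n =>
      rw [Nat.succ_descFactorial_succ]
      push_cast
      ring_nf

private lemma iter_pderiv_mul (s : Fin 2) (u : ℕ) {p : MvPolynomial (Fin 2) ℚ}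
    (hp : pderiv s p = 0) (q : MvPolynomial (Fin 2) ℚ) :
    ((pd s) ^ u) (p * q) = p * ((pd s) ^ u) q := by
  induction u generalizing q with
  | zero => simp
  | succ u ih =>
    rw [pow_succ, Module.End.mul_apply, Module.End.mul_apply]
    have : pd s (p * q) = p * pderiv s q := by
      show pderiv s (p * q) = _
      rw [pderiv_mul, hp]; ring
    rw [this, ih]
    rfl

private lemma eval_one_iter (a : ℚ) (i j u v : ℕ) :
    eval (fun _ => (1 : ℚ))
      (((pd 0) ^ u) (((pd 1) ^ v) (C a * X 0 ^ i * X 1 ^ j))) =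
      a * (i.descFactorial u : ℚ) * (j.descFactorial v : ℚ) := by
  have h01 : ((0 : Fin 2) : Fin 2) ≠ 1 := by decide
  have hp1 : pderiv (1 : Fin 2) ((C a : MvPolynomial (Fin 2) ℚ) * X 0 ^ i) = 0 := by
    rw [pderiv_mul]
    rw [pderiv_pow, pderiv_X, pderiv_C]
    simp [h01.symm]
  have step1 : ((pd 1) ^ v) (C a * X 0 ^ i * X 1 ^ j) =
      (j.descFactorial v : ℚ) • ((C a : MvPolynomial (Fin 2) ℚ) * X 0 ^ i * X 1 ^ (j - v)) := by
    rw [iter_pderiv_mul 1 v hp1, iter_pderiv_pow, mul_smul_comm]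
  have hp0 : pderiv (0 : Fin 2) ((C a : MvPolynomial (Fin 2) ℚ) * X 1 ^ (j - v)) = 0 := by
    rw [pderiv_mul, pderiv_pow, pderiv_X, pderiv_C]
    simp [h01]
  have step2 : ((pd 0) ^ u) ((C a : MvPolynomial (Fin 2) ℚ) * X 0 ^ i * X 1 ^ (j - v)) =
      (i.descFactorial u : ℚ) •
        ((C a : MvPolynomial (Fin 2) ℚ) * X 1 ^ (j - v) * X 0 ^ (i - u)) := by
    have : (C a : MvPolynomial (Fin 2) ℚ) * X 0 ^ i * X 1 ^ (j - v) =
        (C a * X 1 ^ (j - v)) * X 0 ^ i := by ring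
    rw [this, iter_pderiv_mul 0 u hp0, iter_pderiv_pow, mul_smul_comm]
  rw [step1, map_smul, step2, smul_eval, smul_eval]
  simp only [map_mul, eval_C, eval_pow, eval_X, one_pow, mul_one, smul_eq_mul]
  ring

private lemma vanish_iff (S : Finset (ℕ × ℕ)) (a : ℕ × ℕ → ℚ) (m : ℕ) :
    vanishesToOrder m (polyOf S a) ↔
      ∀ u v : ℕ, u + v ≤ m - 1 →
        ∑ q ∈ S, a q * (q.1.descFactorial u : ℚ) * (q.2.descFactorial v : ℚ) = 0 := by
  unfold vanishesToOrder
  apply forall_congr'; intro u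
  apply forall_congr'; intro v
  apply imp_congr_right; intro _
  have : (fun g => MvPolynomial.pderiv (0 : Fin 2) g)^[u]
        ((fun g => MvPolynomial.pderiv (1 : Fin 2) g)^[v] (polyOf S a)) =
      ((pd 0) ^ u) (((pd 1) ^ v) (polyOf S a)) := by
    rw [pd_iterate, pd_iterate]
  rw [this, polyOf, map_sum, map_sum, map_sum]
  have : ∀ q ∈ S, eval (fun _ => (1:ℚ)) (((pd 0) ^ u) (((pd 1) ^ v)
      (C (a q) * X 0 ^ q.1 * X 1 ^ q.2))) =
      a q * (q.1.descFactorial u : ℚ) * (q.2.descFactorial v : ℚ) := by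
    intro q _; exact eval_one_iter (a q) q.1 q.2 u v
  rw [Finset.sum_congr rfl this]

private noncomputable def descP (u v : ℕ) : MvPolynomial (Fin 2) ℚ :=
  (∏ k ∈ Finset.range u, (X 0 - C (k : ℚ))) * ∏ k ∈ Finset.range v, (X 1 - C (k : ℚ))

private lemma eval_prod_desc (x : Fin 2 → ℚ) (s : Fin 2) (i : ℕ) (hx : x s = (i : ℚ)) (u : ℕ) :
    eval x (∏ k ∈ Finset.range u, (X s - C (k : ℚ))) = (i.descFactorial u : ℚ) := by
  rw [map_prod]
  simp only [map_sub, eval_X, eval_C, hx]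
  by_cases h : u ≤ i
  · rw [Nat.descFactorial_eq_prod_range, Nat.cast_prod]
    apply Finset.prod_congr rfl
    intro k hk
    rw [Finset.mem_range] at hk
    rw [Nat.cast_sub (le_of_lt (lt_of_lt_of_le hk h))]
  · push_neg at h
    rw [Finset.prod_eq_zero (Finset.mem_range.mpr h) (by simp),
      Nat.descFactorial_eq_zero_iff_lt.mpr h, Nat.cast_zero]

private lemma eval_descP (i j u v : ℕ) :
    eval ![(i : ℚ), (j : ℚ)] (descP u v) =
      (i.descFactorial u : ℚ) * (j.descFactorial v : ℚ) := by
  rw [descP, map_mul, eval_prod_desc _ 0 i (by simp) u, eval_prod_desc _ 1 j (by simp) v]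

private lemma totalDegree_prod_desc (s : Fin 2) (u : ℕ) :
    (∏ k ∈ Finset.range u, ((X s : MvPolynomial (Fin 2) ℚ) - C (k : ℚ))).totalDegree ≤ u := by
  refine le_trans (totalDegree_finset_prod _ _) ?_
  calc ∑ k ∈ Finset.range u, ((X s : MvPolynomial (Fin 2) ℚ) - C (k : ℚ)).totalDegree
      ≤ ∑ _k ∈ Finset.range u, 1 := by
        apply Finset.sum_le_sum
        intro k _
        calc ((X s : MvPolynomial (Fin 2) ℚ) - C (k : ℚ)).totalDegree
            = ((X s : MvPolynomial (Fin 2) ℚ) + C (-(k:ℚ))).totalDegree := by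
              rw [sub_eq_add_neg, map_neg]
          _ ≤ max (X s : MvPolynomial (Fin 2) ℚ).totalDegree (C (-(k:ℚ))).totalDegree :=
              totalDegree_add _ _
          _ ≤ 1 := by rw [totalDegree_X, totalDegree_C]; simp
    _ = u := by simp

private lemma totalDegree_descP (u v : ℕ) : (descP u v).totalDegree ≤ u + v :=
  le_trans (totalDegree_mul _ _)
    (add_le_add (totalDegree_prod_desc 0 u) (totalDegree_prod_desc 1 v))

private lemma td_aux (s : Fin 2) (u : ℕ) (c : ℚ) :
    (((X s : MvPolynomial (Fin 2) ℚ) ^ u) * (- C c)).totalDegree < u + 1 := by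
  calc (((X s : MvPolynomial (Fin 2) ℚ) ^ u) * (- C c)).totalDegree
      ≤ ((X s : MvPolynomial (Fin 2) ℚ) ^ u).totalDegree + (C (-c) : MvPolynomial (Fin 2) ℚ).totalDegree := by
        rw [← map_neg C]; exact totalDegree_mul _ _
    _ ≤ u * (X s : MvPolynomial (Fin 2) ℚ).totalDegree + 0 := by
        rw [totalDegree_C]
        exact add_le_add (totalDegree_pow _ _) le_rfl
    _ < u + 1 := by rw [totalDegree_X]; omega

private lemma td_lin (s : Fin 2) (c : ℚ) :
    ((X s : MvPolynomial (Fin 2) ℚ) - C c).totalDegree ≤ 1 := by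
  rw [sub_eq_add_neg, ← map_neg C]
  refine le_trans (totalDegree_add _ _) ?_
  rw [totalDegree_X, totalDegree_C]; simp

private lemma prod_desc_lead (s : Fin 2) (u : ℕ) :
    ∃ r : MvPolynomial (Fin 2) ℚ,
      (∏ k ∈ Finset.range u, ((X s : MvPolynomial (Fin 2) ℚ) - C (k : ℚ))) = X s ^ u + r ∧
        (r = 0 ∨ r.totalDegree < u) := by
  induction u with
  | zero => exact ⟨0, by simp, Or.inl rfl⟩
  | succ u ih =>
    obtain ⟨r, hr, hc⟩ := ih
    refine ⟨X s ^ u * (- C (u:ℚ)) + r * (X s - C (u:ℚ)), ?_, ?_⟩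
    · rw [Finset.prod_range_succ, hr]; ring
    · rcases hc with h0 | hlt
      · subst h0
        right
        simp only [zero_mul, add_zero]
        exact td_aux s u _
      · right
        refine lt_of_le_of_lt (totalDegree_add _ _) ?_
        rw [max_lt_iff]
        refine ⟨td_aux s u _, ?_⟩
        calc (r * ((X s : MvPolynomial (Fin 2) ℚ) - C (u:ℚ))).totalDegree
            ≤ r.totalDegree + ((X s : MvPolynomial (Fin 2) ℚ) - C (u:ℚ)).totalDegree :=
              totalDegree_mul _ _
          _ ≤ r.totalDegree + 1 := add_le_add le_rfl (td_lin s _)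
          _ < u + 1 := by omega

private lemma descP_lead (u v : ℕ) :
    ∃ r : MvPolynomial (Fin 2) ℚ,
      descP u v = X 0 ^ u * X 1 ^ v + r ∧ (r = 0 ∨ r.totalDegree < u + v) := by
  obtain ⟨r0, h0, hc0⟩ := prod_desc_lead 0 u
  obtain ⟨r1, h1, hc1⟩ := prod_desc_lead 1 v
  refine ⟨X 0 ^ u * r1 + r0 * X 1 ^ v + r0 * r1, ?_, ?_⟩
  · rw [descP, h0, h1]; ring
  · rcases hc0 with rfl | hlt0 <;> rcases hc1 with rfl | hlt1
    · left; simp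
    · right
      simp only [zero_mul, mul_zero, add_zero]
      calc ((X 0 : MvPolynomial (Fin 2) ℚ) ^ u * r1).totalDegree
          ≤ ((X 0 : MvPolynomial (Fin 2) ℚ) ^ u).totalDegree + r1.totalDegree :=
            totalDegree_mul _ _
        _ ≤ u * 1 + r1.totalDegree := by
            exact add_le_add (le_trans (totalDegree_pow _ _) (by rw [totalDegree_X])) le_rfl
        _ < u + v := by omega
    · right
      simp only [zero_mul, mul_zero, add_zero, zero_add]
      calc (r0 * (X 1 : MvPolynomial (Fin 2) ℚ) ^ v).totalDegree
          ≤ r0.totalDegree + ((X 1 : MvPolynomial (Fin 2) ℚ) ^ v).totalDegree :=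
            totalDegree_mul _ _
        _ ≤ r0.totalDegree + v * 1 := by
            exact add_le_add le_rfl (le_trans (totalDegree_pow _ _) (by rw [totalDegree_X]))
        _ < u + v := by omega
    · right
      have e1 : ((X 0 : MvPolynomial (Fin 2) ℚ) ^ u * r1).totalDegree < u + v := by
        calc ((X 0 : MvPolynomial (Fin 2) ℚ) ^ u * r1).totalDegree
            ≤ ((X 0 : MvPolynomial (Fin 2) ℚ) ^ u).totalDegree + r1.totalDegree :=
              totalDegree_mul _ _
          _ ≤ u * 1 + r1.totalDegree :=
              add_le_add (le_trans (totalDegree_pow _ _) (by rw [totalDegree_X])) le_rfl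
          _ < u + v := by omega
      have e2 : (r0 * (X 1 : MvPolynomial (Fin 2) ℚ) ^ v).totalDegree < u + v := by
        calc (r0 * (X 1 : MvPolynomial (Fin 2) ℚ) ^ v).totalDegree
            ≤ r0.totalDegree + ((X 1 : MvPolynomial (Fin 2) ℚ) ^ v).totalDegree :=
              totalDegree_mul _ _
          _ ≤ r0.totalDegree + v * 1 :=
              add_le_add le_rfl (le_trans (totalDegree_pow _ _) (by rw [totalDegree_X]))
          _ < u + v := by omega
      have e3 : (r0 * r1).totalDegree < u + v := by
        calc (r0 * r1).totalDegree ≤ r0.totalDegree + r1.totalDegree := totalDegree_mul _ _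
          _ < u + v := by omega
      refine lt_of_le_of_lt (totalDegree_add _ _) ?_
      rw [max_lt_iff]
      exact ⟨lt_of_le_of_lt (totalDegree_add _ _) (by rw [max_lt_iff]; exact ⟨e1, e2⟩), e3⟩

private def FF (S : Finset (ℕ × ℕ)) (m : ℕ) :
    {uv : ℕ × ℕ // uv.1 + uv.2 ≤ m - 1} → (↥S → ℚ) :=
  fun uv q => (q.1.1.descFactorial uv.1.1 : ℚ) * (q.1.2.descFactorial uv.1.2 : ℚ)

private noncomputable def Wsp (S : Finset (ℕ × ℕ)) (m : ℕ) : Submodule ℚ (↥S → ℚ) :=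
  Submodule.span ℚ (Set.range (FF S m))

private noncomputable def restr (S : Finset (ℕ × ℕ)) (g : MvPolynomial (Fin 2) ℚ) : ↥S → ℚ :=
  fun q => eval ![(q.1.1 : ℚ), (q.1.2 : ℚ)] g

private lemma restr_descP (S : Finset (ℕ × ℕ)) (m : ℕ) (u v : ℕ) (huv : u + v ≤ m - 1) :
    restr S (descP u v) = FF S m ⟨(u, v), huv⟩ := by
  funext q
  exact eval_descP q.1.1 q.1.2 u v

private lemma restr_mem (S : Finset (ℕ × ℕ)) (m : ℕ) :
    ∀ d, d ≤ m - 1 → ∀ g : MvPolynomial (Fin 2) ℚ,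
      g.totalDegree ≤ d → restr S g ∈ Wsp S m := by
  intro d
  induction d using Nat.strong_induction_on with
  | _ d ih =>
    intro hdm g hg
    have hexp : restr S g =
        ∑ e ∈ g.support, (g.coeff e) • restr S (X 0 ^ (e 0) * X 1 ^ (e 1)) := by
      funext q
      simp only [restr, Finset.sum_apply, Pi.smul_apply, smul_eq_mul, map_mul, map_pow,
        eval_X, Matrix.cons_val_zero, Matrix.cons_val_one, Matrix.head_cons]
      rw [eval_eq']
      refine Finset.sum_congr rfl fun e _ => ?_
      rw [Fin.prod_univ_two]
      simp [mul_assoc]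
    rw [hexp]
    apply Submodule.sum_mem
    intro e he
    apply Submodule.smul_mem
    have hed : e 0 + e 1 ≤ d := by
      have h1 := MvPolynomial.le_totalDegree he
      have h2 : (e.sum fun _ n => n) = e 0 + e 1 := by
        rw [Finsupp.sum_fintype]
        · exact Fin.sum_univ_two _
        · intro _; rfl
      omega
    obtain ⟨r, hP, hr⟩ := descP_lead (e 0) (e 1)
    have hXY : restr S (X 0 ^ (e 0) * X 1 ^ (e 1)) =
        restr S (descP (e 0) (e 1)) - restr S r := by
      funext q; simp [restr, hP]
    rw [hXY]
    apply sub_mem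
    · rw [restr_descP S m (e 0) (e 1) (by omega)]
      exact Submodule.subset_span (Set.mem_range_self _)
    · rcases hr with rfl | hrlt
      · have : restr S (0 : MvPolynomial (Fin 2) ℚ) = 0 := by funext q; simp [restr]
        rw [this]; exact Submodule.zero_mem _
      · exact ih r.totalDegree (by omega) (by omega) r le_rfl

/-- for a fixed point `p₀ = (i₀,j₀) ∈ S`, every polynomial
supported on `S` vanishing to order `≥ m` at `(1,1)` has coefficient
`a_{i₀ j₀} = 0`, iff there is a polynomial of total degree `≤ m - 1` that is
nonzero at `p₀` and vanishes at every other point of `S`. -/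
theorem coeff_zero_iff_separating_poly (S : Finset (ℕ × ℕ)) (m : ℕ) (hm : 1 ≤ m)
    (p₀ : ℕ × ℕ) (hp₀ : p₀ ∈ S) :
    (∀ a : ℕ × ℕ → ℚ, vanishesToOrder m (polyOf S a) → a p₀ = 0) ↔
      ∃ g : MvPolynomial (Fin 2) ℚ, g.totalDegree ≤ m - 1 ∧
        MvPolynomial.eval ![(p₀.1 : ℚ), (p₀.2 : ℚ)] g ≠ 0 ∧
        ∀ q ∈ S, q ≠ p₀ → MvPolynomial.eval ![(q.1 : ℚ), (q.2 : ℚ)] g = 0 := by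
  constructor
  · intro hA
    set δ : ↥S → ℚ := Pi.single (⟨p₀, hp₀⟩ : ↥S) 1 with hδdef
    have hδ : δ ∈ Wsp S m := by
      by_contra hnm
      obtain ⟨φ, hφx, hφmap⟩ := Submodule.exists_dual_map_eq_bot_of_notMem hnm inferInstance
      set a : ℕ × ℕ → ℚ :=
        fun p => if h : p ∈ S then φ (Pi.single (⟨p, h⟩ : ↥S) 1) else 0 with ha
      have hφw : ∀ w : ↥S → ℚ, φ w = ∑ q : ↥S, w q * φ (Pi.single q 1) := by
        intro w
        conv_lhs => rw [← Finset.univ_sum_single w]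
        rw [map_sum]
        refine Finset.sum_congr rfl fun q _ => ?_
        have h1 : Pi.single q (w q) = (w q) • (Pi.single q (1 : ℚ) : ↥S → ℚ) := by
          rw [← Pi.single_smul, smul_eq_mul, mul_one]
        rw [h1, map_smul, smul_eq_mul]
      have hvan : vanishesToOrder m (polyOf S a) := by
        rw [vanish_iff]
        intro u v huv
        have hgen : FF S m ⟨(u, v), huv⟩ ∈ Wsp S m :=
          Submodule.subset_span (Set.mem_range_self _)
        have h0 : φ (FF S m ⟨(u, v), huv⟩) = 0 := by
          have h2 := Submodule.mem_map_of_mem (f := φ) hgen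
          rw [hφmap] at h2
          exact (Submodule.mem_bot ℚ).mp h2
        rw [hφw] at h0
        rw [← Finset.sum_attach S
          (fun q => a q * (q.1.descFactorial u : ℚ) * (q.2.descFactorial v : ℚ)), ← h0]
        rw [Finset.univ_eq_attach]
        refine Finset.sum_congr rfl fun q _ => ?_
        have haq : a (q : ℕ × ℕ) = φ (Pi.single q 1) := by
          rw [ha]
          simp only [dif_pos q.2]
        rw [haq, FF]
        ring
      have h3 := hA a hvan
      rw [ha] at h3
      simp only [dif_pos hp₀] at h3
      exact hφx (by rw [hδdef, h3])
    rw [Wsp, Finsupp.mem_span_range_iff_exists_finsupp] at hδ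
    obtain ⟨c, hc⟩ := hδ
    refine ⟨∑ i ∈ c.support, c i • descP i.1.1 i.1.2, ?_, ?_, ?_⟩
    · refine le_trans (totalDegree_finset_sum _ _) (Finset.sup_le fun i _ => ?_)
      refine le_trans (totalDegree_smul_le _ _) (le_trans (totalDegree_descP _ _) ?_)
      exact i.2
    · have hev : ∀ (q : ℕ × ℕ) (hq : q ∈ S),
          eval ![(q.1 : ℚ), (q.2 : ℚ)] (∑ i ∈ c.support, c i • descP i.1.1 i.1.2) =
            δ ⟨q, hq⟩ := by
        intro q hq
        rw [map_sum]
        have h4 : ∀ i ∈ c.support,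
            eval ![(q.1 : ℚ), (q.2 : ℚ)] (c i • descP i.1.1 i.1.2) =
              c i * FF S m i ⟨q, hq⟩ := by
          intro i _
          rw [smul_eval, eval_descP]
          rfl
        rw [Finset.sum_congr rfl h4, ← hc, Finsupp.sum]
        rw [Finset.sum_apply]
        rfl
      rw [hev p₀ hp₀, hδdef, Pi.single_eq_same]
      exact one_ne_zero
    · intro q hq hqne
      have hev : eval ![(q.1 : ℚ), (q.2 : ℚ)] (∑ i ∈ c.support, c i • descP i.1.1 i.1.2) =
          δ ⟨q, hq⟩ := by
        rw [map_sum]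
        have h4 : ∀ i ∈ c.support,
            eval ![(q.1 : ℚ), (q.2 : ℚ)] (c i • descP i.1.1 i.1.2) =
              c i * FF S m i ⟨q, hq⟩ := by
          intro i _
          rw [smul_eval, eval_descP]
          rfl
        rw [Finset.sum_congr rfl h4, ← hc, Finsupp.sum]
        rw [Finset.sum_apply]
        rfl
      rw [hev, hδdef, Pi.single_eq_of_ne (fun h => hqne (congrArg Subtype.val h))]
  · rintro ⟨g, hdeg, hne0, hzero⟩ a hvan
    have hres : restr S g ∈ Wsp S m := restr_mem S m (m - 1) le_rfl g hdeg
    have hker : ∀ w ∈ Wsp S m, ∑ q ∈ S.attach, a q.1 * w q = 0 := by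
      intro w hw
      induction hw using Submodule.span_induction with
      | mem w hwmem =>
        obtain ⟨⟨⟨u, v⟩, huv⟩, rfl⟩ := hwmem
        have h5 := (vanish_iff S a m).mp hvan u v huv
        rw [← Finset.sum_attach S
          (fun q => a q * (q.1.descFactorial u : ℚ) * (q.2.descFactorial v : ℚ))] at h5
        simpa [FF, mul_assoc] using h5
      | zero => simp
      | add x y _ _ hx hy => simp [Pi.add_apply, mul_add, Finset.sum_add_distrib, hx, hy]
      | smul r x _ hx =>
        simp only [Pi.smul_apply, smul_eq_mul]
        calc ∑ q ∈ S.attach, a q.1 * (r * x q)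
            = r * ∑ q ∈ S.attach, a q.1 * x q := by
              rw [Finset.mul_sum]
              exact Finset.sum_congr rfl fun q _ => by ring
          _ = 0 := by rw [hx, mul_zero]
    have h := hker _ hres
    have h6 : ∑ q ∈ S.attach, a q.1 * restr S g q =
        ∑ q ∈ S, a q * eval ![(q.1 : ℚ), (q.2 : ℚ)] g :=
      Finset.sum_attach S (fun q => a q * eval ![(q.1 : ℚ), (q.2 : ℚ)] g)
    rw [h6, Finset.sum_eq_single p₀
      (fun q hq hqne => by rw [hzero q hq hqne, mul_zero])
      (fun h' => absurd hp₀ h')] at h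
    rcases mul_eq_zero.mp h with h7 | h7
    · exact h7
    · exact absurd h7 hne0
end

section
/- The ℚ-vector space V = { f ∈ ℚ[x,y] : f has total degree ≤ n, f(q) = 0 for all q ∈ Q, and f(P_k) = 0 for all 0 ≤ k ≤ n−1 } has dimension exactly 1. (Equivalently, there is a curve of degree ≤ n passing through the n(n+1)/2 points of Q and the n points P_0,…,P_{n−1}, and it is unique up to scaling.) -/
open Polynomial MvPolynomial Finset
open scoped Polynomial.Bivariate

/-! ### Univariate helpers -/

lemma uni_vanish {d : ℕ} {α : ℚ} {R : ℚ[X]} (hdeg : R.natDegree ≤ d)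
    (hvan : ∀ b : ℕ, b ≤ d → R.eval (α + b) = 0) : R = 0 := by
  apply Polynomial.eq_zero_of_natDegree_lt_card_of_eval_eq_zero' R
    ((Finset.range (d+1)).image (fun b : ℕ => α + b))
  · intro t ht
    simp only [Finset.mem_image, Finset.mem_range] at ht
    obtain ⟨b, hb, rfl⟩ := ht
    exact hvan b (by omega)
  · rw [Finset.card_image_of_injective]
    · simpa using Nat.lt_succ_of_le hdeg
    · intro a b hab
      simp only at hab
      have : (a : ℚ) = b := by linarith
      exact_mod_cast this

/-! ### Triangle vanishing lemma, bivariate polynomial version -/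

lemma lemA : ∀ d : ℕ, ∀ u₀ : ℚ, ∀ v₀ : ℚ, ∀ P : ℚ[X][Y],
    (∀ j : ℕ, P.coeff j ≠ 0 → (P.coeff j).natDegree + j ≤ d) →
    (∀ a b : ℕ, a + b ≤ d → P.evalEval (v₀ + b) (u₀ + a) = 0) →
    P = 0 := by
  intro d
  induction d using Nat.strong_induction_on with
  | _ d IH =>
  intro u₀ v₀ P hdeg hvan
  have hR : P.eval (Polynomial.C u₀) = 0 := by
    apply uni_vanish (d := d) (α := v₀)
    · rw [Polynomial.eval_eq_sum_range]
      apply Polynomial.natDegree_sum_le_of_forall_le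
      intro j _
      refine (Polynomial.natDegree_mul_le).trans ?_
      rcases eq_or_ne (P.coeff j) 0 with h | h
      · simp [h]
      · have h1 := hdeg j h
        have h2 : (P.coeff j).natDegree ≤ d := by omega
        simpa [Polynomial.natDegree_pow] using h2
    · intro b hb
      have h0 := hvan 0 b (by omega)
      simpa using h0
  set G : ℚ[X][Y] := P /ₘ (Polynomial.X - Polynomial.C (Polynomial.C u₀)) with hGdef
  have hPG : (Polynomial.X - Polynomial.C (Polynomial.C u₀)) * G = P :=
    Polynomial.mul_divByMonic_eq_iff_isRoot.mpr hR
  have hGcoeff : ∀ j : ℕ, G.coeff j = P.coeff (j+1) + Polynomial.C u₀ * G.coeff (j+1) := by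
    intro j
    have := congrArg (fun W => Polynomial.coeff W (j+1)) hPG
    simp only [sub_mul, Polynomial.coeff_sub, Polynomial.coeff_X_mul,
      Polynomial.coeff_C_mul] at this
    linear_combination this
  have claim : ∀ t j : ℕ, G.natDegree < j + t → G.coeff j ≠ 0 →
      (G.coeff j).natDegree + (j+1) ≤ d := by
    intro t
    induction t with
    | zero =>
      intro j hj hne
      exact absurd (Polynomial.coeff_eq_zero_of_natDegree_lt (by omega)) hne
    | succ t iht =>
      intro j hj hne
      rcases eq_or_ne (G.coeff (j+1)) 0 with h1 | h1
      · have hco : G.coeff j = P.coeff (j+1) := by rw [hGcoeff j, h1]; ring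
        have hp1 : P.coeff (j+1) ≠ 0 := by rw [← hco]; exact hne
        have := hdeg (j+1) hp1
        rw [hco]; omega
      · have ih1 := iht (j+1) (by omega) h1
        have hb1 : (G.coeff j).natDegree ≤
            max (P.coeff (j+1)).natDegree (Polynomial.C u₀ * G.coeff (j+1)).natDegree := by
          rw [hGcoeff j]; exact Polynomial.natDegree_add_le _ _
        have hb2 : (Polynomial.C u₀ * G.coeff (j+1)).natDegree ≤ (G.coeff (j+1)).natDegree :=
          Polynomial.natDegree_C_mul_le _ _
        rcases eq_or_ne (P.coeff (j+1)) 0 with h2 | h2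
        · simp only [h2, Polynomial.natDegree_zero] at hb1
          omega
        · have := hdeg (j+1) h2
          omega
  have hGbound : ∀ j : ℕ, G.coeff j ≠ 0 → (G.coeff j).natDegree + (j+1) ≤ d :=
    fun j => claim (G.natDegree + 1) j (by omega)
  rcases Nat.eq_zero_or_pos d with hd0 | hdpos
  · have hG0 : G = 0 := by
      refine Polynomial.ext fun j => ?_
      rw [Polynomial.coeff_zero]
      by_contra hne
      have := hGbound j hne
      omega
    rw [← hPG, hG0, mul_zero]
  · have hG0 : G = 0 := by
      apply IH (d-1) (by omega) (u₀ + 1) v₀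
      · intro j hne
        have := hGbound j hne
        omega
      · intro a b hab
        have hv := hvan (a+1) b (by omega)
        rw [← hPG] at hv
        have hfac : ((Polynomial.X - Polynomial.C (Polynomial.C u₀)) : ℚ[X][Y]).evalEval
            (v₀ + b) (u₀ + (a+1 : ℕ)) = (a : ℚ) + 1 := by
          simp [Polynomial.evalEval]
        rw [Polynomial.evalEval_mul, hfac] at hv
        have hane : ((a : ℚ) + 1) ≠ 0 := by positivity
        have := (mul_eq_zero.mp hv).resolve_left hane
        convert this using 2
        push_cast
        · rfl
        · push_cast
          ring
    rw [← hPG, hG0, mul_zero]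

/-! ### Transfer from `MvPolynomial (Fin 2) ℚ` to `ℚ[X][Y]` -/

noncomputable def psiQ : MvPolynomial (Fin 1) ℚ →+* Polynomial ℚ :=
  MvPolynomial.eval₂Hom Polynomial.C (fun _ => Polynomial.X)

lemma psiQ_comp_eval (v : ℚ) :
    (Polynomial.evalRingHom v).comp psiQ
      = (MvPolynomial.eval ![v] : MvPolynomial (Fin 1) ℚ →+* ℚ) := by
  apply MvPolynomial.ringHom_ext
  · intro r; simp [psiQ]
  · intro i; fin_cases i; simp [psiQ]

lemma psiQ_eval (q : MvPolynomial (Fin 1) ℚ) (v : ℚ) :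
    (psiQ q).eval v = MvPolynomial.eval ![v] q := by
  have := congrArg (fun φ => φ q) (psiQ_comp_eval v)
  simpa using this

lemma psiQ_inj : Function.Injective psiQ := by
  intro a b h
  apply MvPolynomial.funext
  intro x
  have hx : x = ![x 0] := by
    funext i; fin_cases i; rfl
  rw [hx, ← psiQ_eval, ← psiQ_eval, h]

lemma psiQ_natDegree (q : MvPolynomial (Fin 1) ℚ) : (psiQ q).natDegree ≤ q.totalDegree := by
  rw [psiQ, MvPolynomial.coe_eval₂Hom, MvPolynomial.eval₂_eq]
  apply Polynomial.natDegree_sum_le_of_forall_le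
  intro m hm
  refine (Polynomial.natDegree_C_mul_le _ _).trans ?_
  refine (Polynomial.natDegree_prod_le _ _).trans ?_
  refine le_trans ?_ (MvPolynomial.le_totalDegree hm)
  apply le_of_eq
  simp [Finsupp.sum]

noncomputable def PP (f : MvPolynomial (Fin 2) ℚ) : ℚ[X][Y] :=
  ((MvPolynomial.finSuccEquiv ℚ 1) f).map psiQ

lemma PP_eval (f : MvPolynomial (Fin 2) ℚ) (u v : ℚ) :
    MvPolynomial.eval ![u, v] f = (PP f).evalEval v u := by
  have h1 : MvPolynomial.eval ![u, v] f =
      Polynomial.eval u (Polynomial.map (MvPolynomial.eval ![v])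
        ((MvPolynomial.finSuccEquiv ℚ 1) f)) := by
    have : (![u, v] : Fin 2 → ℚ) = Fin.cons u ![v] := by
      funext i; fin_cases i <;> rfl
    rw [this, MvPolynomial.eval_eq_eval_mv_eval']
  rw [h1, ← psiQ_comp_eval v, ← Polynomial.map_map, ← PP, Polynomial.map_evalRingHom_eval]

lemma PP_coeff_deg (f : MvPolynomial (Fin 2) ℚ) (d : ℕ) (hf : f.totalDegree ≤ d) :
    ∀ j : ℕ, (PP f).coeff j ≠ 0 → ((PP f).coeff j).natDegree + j ≤ d := by
  intro j hj
  rw [PP, Polynomial.coeff_map] at hj ⊢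
  have hne : ((MvPolynomial.finSuccEquiv ℚ 1) f).coeff j ≠ 0 := by
    intro h; rw [h] at hj; simp at hj
  have h1 := MvPolynomial.totalDegree_coeff_finSuccEquiv_add_le f j hne
  have h2 := psiQ_natDegree (((MvPolynomial.finSuccEquiv ℚ 1) f).coeff j)
  omega

lemma PP_zero (f : MvPolynomial (Fin 2) ℚ) (h : PP f = 0) : f = 0 := by
  rw [PP] at h
  have h1 : ((MvPolynomial.finSuccEquiv ℚ 1) f) = 0 :=
    Polynomial.map_injective psiQ psiQ_inj (by simpa using h)
  have := (MvPolynomial.finSuccEquiv ℚ 1).injective (by simpa using h1)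
  simpa using this

/-- Triangle vanishing lemma: a polynomial of total degree at most `d` vanishing on the
triangular grid `{(u₀+a, b) : a + b ≤ d}` is zero. -/
lemma lemA_mv (d : ℕ) (u₀ : ℚ) (f : MvPolynomial (Fin 2) ℚ) (hdeg : f.totalDegree ≤ d)
    (hvan : ∀ a b : ℕ, a + b ≤ d → MvPolynomial.eval ![u₀ + a, (b : ℚ)] f = 0) : f = 0 := by
  apply PP_zero
  apply lemA d u₀ 0
  · exact PP_coeff_deg f d hdeg
  · intro a b hab
    rw [← PP_eval]
    have := hvan a b hab
    convert this using 3
    ring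

/-! ### The basis polynomials `Em` -/

noncomputable def Em (n α : ℕ) (m : ℕ) : MvPolynomial (Fin 2) ℚ :=
  (∏ i ∈ range m, (MvPolynomial.X 0 - MvPolynomial.C ((α : ℚ) + i))) *
    (∏ j ∈ range (n - m), (MvPolynomial.X 1 - MvPolynomial.C (j : ℚ)))

lemma eval_Em (n α m : ℕ) (p : Fin 2 → ℚ) :
    MvPolynomial.eval p (Em n α m) =
      (∏ i ∈ range m, (p 0 - ((α : ℚ) + i))) * (∏ j ∈ range (n - m), (p 1 - (j : ℚ))) := by
  rw [Em, map_mul, map_prod, map_prod]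
  simp

lemma totalDegree_Em (n α m : ℕ) (hm : m ≤ n) : (Em n α m).totalDegree ≤ n := by
  refine (MvPolynomial.totalDegree_mul _ _).trans ?_
  have h1 : (∏ i ∈ range m,
      (MvPolynomial.X (0:Fin 2) - MvPolynomial.C ((α : ℚ) + i))).totalDegree ≤ m := by
    refine (MvPolynomial.totalDegree_finset_prod _ _).trans ?_
    refine le_trans (Finset.sum_le_card_nsmul _ _ 1 ?_) (by simp)
    intro i _
    refine (MvPolynomial.totalDegree_sub _ _).trans ?_
    refine max_le ?_ ?_
    · rw [MvPolynomial.totalDegree_X]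
    · rw [MvPolynomial.totalDegree_C]; omega
  have h2 : (∏ j ∈ range (n - m),
      (MvPolynomial.X (1:Fin 2) - MvPolynomial.C (j : ℚ))).totalDegree ≤ n - m := by
    refine (MvPolynomial.totalDegree_finset_prod _ _).trans ?_
    refine le_trans (Finset.sum_le_card_nsmul _ _ 1 ?_) (by simp)
    intro i _
    refine (MvPolynomial.totalDegree_sub _ _).trans ?_
    refine max_le ?_ ?_
    · rw [MvPolynomial.totalDegree_X]
    · rw [MvPolynomial.totalDegree_C]; omega
  omega

lemma Em_vanish_Q (n α m : ℕ) (a b : ℕ) (hab : a + b < n) :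
    MvPolynomial.eval ![(α : ℚ) + a, (b : ℚ)] (Em n α m) = 0 := by
  rw [eval_Em]
  rcases lt_or_ge a m with h | h
  · apply mul_eq_zero_of_left
    apply Finset.prod_eq_zero (Finset.mem_range.mpr h)
    simp
  · apply mul_eq_zero_of_right
    apply Finset.prod_eq_zero (Finset.mem_range.mpr (show b < n - m by omega))
    simp

lemma prod_desc (k : ℕ) : (∏ i ∈ range k, ((k : ℚ) - i)) = (k.factorial : ℚ) := by
  have h1 : (∏ i ∈ range k, ((k : ℚ) - i)) = ((∏ i ∈ range k, (k - i) : ℕ) : ℚ) := by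
    rw [Nat.cast_prod]
    refine Finset.prod_congr rfl fun i hi => ?_
    rw [Finset.mem_range] at hi
    rw [Nat.cast_sub (le_of_lt hi)]
  rw [h1]
  congr 1
  calc ∏ i ∈ range k, (k - i) = ∏ i ∈ range k, ((k - 1 - i) + 1) := by
        refine Finset.prod_congr rfl fun i hi => ?_
        rw [Finset.mem_range] at hi
        omega
    _ = ∏ i ∈ range k, (i + 1) := Finset.prod_range_reflect (fun j => j + 1) k
    _ = k.factorial := Finset.prod_range_add_one_eq_factorial k

lemma Em_diag (n α m : ℕ) (a b : ℕ) (hab : a + b = n) (hm : m ≤ n) :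
    MvPolynomial.eval ![(α : ℚ) + a, (b : ℚ)] (Em n α m) =
      if a = m then ((a.factorial * b.factorial : ℕ) : ℚ) else 0 := by
  rw [eval_Em]
  rcases lt_trichotomy a m with h | h | h
  · rw [if_neg (by omega)]
    apply mul_eq_zero_of_left
    apply Finset.prod_eq_zero (Finset.mem_range.mpr h)
    simp
  · rw [if_pos h]
    subst h
    have hb : b = n - a := by omega
    subst hb
    have e1 : (∏ i ∈ range a, (((α : ℚ) + a) - ((α : ℚ) + i))) = (a.factorial : ℚ) := by
      rw [← prod_desc a]
      exact Finset.prod_congr rfl fun i hi => by ring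
    have e2 : (∏ j ∈ range (n - a), (((n - a : ℕ) : ℚ) - (j : ℚ))) = ((n-a).factorial : ℚ) := by
      rw [← prod_desc (n - a)]
    rw [show (![(α : ℚ) + a, ((n - a : ℕ) : ℚ)] : Fin 2 → ℚ) 0 = (α : ℚ) + a from rfl]
    rw [show (![(α : ℚ) + a, ((n - a : ℕ) : ℚ)] : Fin 2 → ℚ) 1 = ((n - a : ℕ) : ℚ) from rfl]
    rw [e1, e2]
    push_cast
    ring
  · rw [if_neg (by omega)]
    apply mul_eq_zero_of_right
    apply Finset.prod_eq_zero (Finset.mem_range.mpr (show b < n - m by omega))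
    simp

noncomputable def Am (α : ℕ) (m : ℕ) : ℚ := ∏ i ∈ range m, (-(α : ℚ) - i)

noncomputable def ffp (k : ℕ) : ℚ[X] := ∏ j ∈ range k, (Polynomial.X - Polynomial.C (j : ℚ))

lemma ffp_monic (k : ℕ) : (ffp k).Monic :=
  monic_prod_of_monic _ _ fun j _ => monic_X_sub_C _

lemma ffp_natDegree (k : ℕ) : (ffp k).natDegree = k := by
  rw [ffp, natDegree_prod]
  · simp only [natDegree_X_sub_C]
    simp
  · intro j _
    exact X_sub_C_ne_zero _

lemma ffp_eval (k : ℕ) (t : ℚ) : (ffp k).eval t = ∏ j ∈ range k, (t - (j : ℚ)) := by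
  rw [ffp, Polynomial.eval_prod]
  simp

lemma Em_line (n α m : ℕ) (y : ℚ) :
    MvPolynomial.eval ![(0 : ℚ), y] (Em n α m) = Am α m * (ffp (n - m)).eval y := by
  rw [eval_Em, ffp_eval, Am]
  rw [show (![(0:ℚ), y] : Fin 2 → ℚ) 0 = 0 from rfl, show (![(0:ℚ), y] : Fin 2 → ℚ) 1 = y from rfl]
  congr 1
  exact Finset.prod_congr rfl fun i _ => by ring

/-! ### Linear independence of the `ffp` and the kernel claim -/

lemma ffp_indep (n : ℕ) (g : ℕ → ℚ)
    (hG : ∑ m ∈ range (n+1), Polynomial.C (g m) * ffp (n - m) = 0) :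
    ∀ m, m ≤ n → g m = 0 := by
  intro m
  induction m using Nat.strong_induction_on with
  | _ m IH =>
  intro hm
  have hco := congrArg (fun W => Polynomial.coeff W (n - m)) hG
  simp only [Polynomial.finset_sum_coeff, Polynomial.coeff_zero, Polynomial.coeff_C_mul] at hco
  rw [Finset.sum_eq_single m] at hco
  · have hlead : (ffp (n - m)).coeff (n - m) = 1 := by
      have := (ffp_monic (n - m)).leadingCoeff
      rwa [Polynomial.leadingCoeff, ffp_natDegree] at this
    rw [hlead, mul_one] at hco
    exact hco
  · intro m' hm' hne
    rw [Finset.mem_range] at hm'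
    rcases lt_or_gt_of_ne hne with h | h
    · rw [IH m' h (by omega), zero_mul]
    · have : (ffp (n - m')).coeff (n - m) = 0 := by
        apply Polynomial.coeff_eq_zero_of_natDegree_lt
        rw [ffp_natDegree]
        omega
      rw [this, mul_zero]
  · intro h
    exact absurd (Finset.mem_range.mpr (by omega)) h

lemma Am_ne_zero (α : ℕ) (hα : 1 ≤ α) (m : ℕ) : Am α m ≠ 0 := by
  apply Finset.prod_ne_zero_iff.mpr
  intro i _
  have h1 : (1 : ℚ) ≤ (α : ℚ) := by exact_mod_cast hα
  have h2 : (0 : ℚ) ≤ (i : ℚ) := by positivity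
  intro h
  nlinarith

lemma kernel_claim (n α β : ℕ) (hn : 1 ≤ n) (hα : 1 ≤ α) (c : ℕ → ℚ)
    (hvanc : ∀ k : ℕ, k < n →
      ∑ m ∈ range (n+1), (c m * Am α m) * (ffp (n - m)).eval ((β : ℚ) + k) = 0)
    (hc0 : c 0 = 0) : ∀ m, m ≤ n → c m = 0 := by
  set Gp : ℚ[X] := ∑ m ∈ range (n+1), Polynomial.C (c m * Am α m) * ffp (n - m) with hGp
  have hGpdeg : Gp.natDegree ≤ n - 1 := by
    rw [hGp]
    apply Polynomial.natDegree_sum_le_of_forall_le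
    intro m hm
    rw [Finset.mem_range] at hm
    rcases Nat.eq_zero_or_pos m with rfl | hmpos
    · rw [hc0, zero_mul, Polynomial.C_0, zero_mul]
      simp
    · refine (Polynomial.natDegree_C_mul_le _ _).trans ?_
      rw [ffp_natDegree]
      omega
  have hGp0 : Gp = 0 := by
    apply uni_vanish (α := (β : ℚ)) hGpdeg
    intro b hb
    rw [hGp, Polynomial.eval_finset_sum]
    have := hvanc b (by omega)
    simpa using this
  have := ffp_indep n (fun m => c m * Am α m) (by rw [← hGp]; exact hGp0)
  intro m hm
  exact (mul_eq_zero.mp (this m hm)).resolve_right (Am_ne_zero α hα m)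

/-! ### Existence of a nonzero kernel vector -/

noncomputable def Lmap (n α β : ℕ) : (Fin (n+1) → ℚ) →ₗ[ℚ] (Fin n → ℚ) where
  toFun c := fun k => ∑ m : Fin (n+1), c m * (Am α m.1 * (ffp (n - m.1)).eval ((β : ℚ) + k.1))
  map_add' x y := by
    funext k
    simp [add_mul, Finset.sum_add_distrib]
  map_smul' r x := by
    funext k
    simp [Finset.mul_sum, mul_assoc]

noncomputable def cext {n : ℕ} (c : Fin (n+1) → ℚ) : ℕ → ℚ :=
  fun m => if h : m < n + 1 then c ⟨m, h⟩ else 0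

lemma exists_c0 (n α β : ℕ) :
    ∃ c : Fin (n+1) → ℚ, c ≠ 0 ∧ ∀ k : ℕ, k < n →
      ∑ m ∈ range (n+1), cext c m * (Am α m * (ffp (n - m)).eval ((β : ℚ) + k)) = 0 := by
  have hker : LinearMap.ker (Lmap n α β) ≠ ⊥ := by
    intro h
    have hinj : Function.Injective (Lmap n α β) := LinearMap.ker_eq_bot.mp h
    have hle := LinearMap.finrank_le_finrank_of_injective hinj
    rw [Module.finrank_fin_fun, Module.finrank_fin_fun] at hle
    omega
  obtain ⟨c, hcmem, hcne⟩ := Submodule.exists_mem_ne_zero_of_ne_bot hker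
  refine ⟨c, hcne, ?_⟩
  intro k hk
  have hc := LinearMap.mem_ker.mp hcmem
  have hck := congrFun hc ⟨k, hk⟩
  have hsum : ∑ m : Fin (n+1), c m * (Am α m.1 * (ffp (n - m.1)).eval ((β : ℚ) + k)) = 0 := hck
  rw [← hsum,
    ← Fin.sum_univ_eq_sum_range (fun m => cext c m * (Am α m * (ffp (n - m)).eval ((β : ℚ) + k)))]
  refine Finset.sum_congr rfl fun m _ => ?_
  congr 1
  simp [cext, m.isLt, Fin.is_le m, not_lt.mpr (Fin.is_le m)]

/-! ### Representation lemma -/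

lemma eval_comb (n α : ℕ) (c : ℕ → ℚ) (p : Fin 2 → ℚ) :
    MvPolynomial.eval p (∑ m ∈ range (n+1), MvPolynomial.C (c m) * Em n α m)
      = ∑ m ∈ range (n+1), c m * MvPolynomial.eval p (Em n α m) := by
  rw [map_sum]
  exact Finset.sum_congr rfl fun m _ => by rw [map_mul, MvPolynomial.eval_C]

lemma represent (n α : ℕ) (hn : 1 ≤ n) (f : MvPolynomial (Fin 2) ℚ)
    (hdeg : f.totalDegree ≤ n)
    (hQ : ∀ a b : ℕ, a + b ≤ n - 1 →
      MvPolynomial.eval ![(α : ℚ) + (a : ℚ), (b : ℚ)] f = 0) :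
    f = ∑ m ∈ range (n+1), MvPolynomial.C
        (MvPolynomial.eval ![(α : ℚ) + m, ((n - m : ℕ) : ℚ)] f
          / ((m.factorial * (n - m).factorial : ℕ) : ℚ)) * Em n α m := by
  set c : ℕ → ℚ := fun m => MvPolynomial.eval ![(α : ℚ) + m, ((n - m : ℕ) : ℚ)] f
    / ((m.factorial * (n - m).factorial : ℕ) : ℚ) with hc
  set S := ∑ m ∈ range (n+1), MvPolynomial.C (c m) * Em n α m with hS
  have hdegS : S.totalDegree ≤ n := by
    rw [hS]
    apply MvPolynomial.totalDegree_finsetSum_le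
    intro m hm
    rw [Finset.mem_range] at hm
    refine (MvPolynomial.totalDegree_mul _ _).trans ?_
    rw [MvPolynomial.totalDegree_C]
    simpa using totalDegree_Em n α m (by omega)
  have hzero : f - S = 0 := by
    apply lemA_mv n (α : ℚ)
    · refine (MvPolynomial.totalDegree_sub _ _).trans (max_le hdeg hdegS)
    · intro a b hab
      rw [map_sub, hS, eval_comb]
      rcases lt_or_eq_of_le hab with hlt | heq
      · rw [hQ a b (by omega)]
        rw [Finset.sum_eq_zero, sub_zero]
        intro m _
        rw [Em_vanish_Q n α m a b (by omega), mul_zero]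
      · have ha : a ≤ n := by omega
        have hsum : ∑ m ∈ range (n+1), c m * MvPolynomial.eval ![(α : ℚ) + a, (b : ℚ)] (Em n α m)
            = c a * ((a.factorial * b.factorial : ℕ) : ℚ) := by
          rw [Finset.sum_eq_single a]
          · rw [Em_diag n α a a b heq (by omega), if_pos rfl]
          · intro m hm hne
            rw [Finset.mem_range] at hm
            rw [Em_diag n α m a b heq (by omega), if_neg (by omega), mul_zero]
          · intro h
            exact absurd (Finset.mem_range.mpr (by omega)) h
        rw [hsum]
        have hb : b = n - a := by omega
        have hfacne : ((a.factorial * b.factorial : ℕ) : ℚ) ≠ 0 := by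
          exact_mod_cast Nat.mul_ne_zero a.factorial_ne_zero b.factorial_ne_zero
        rw [hc]
        simp only
        rw [← hb]
        rw [div_mul_cancel₀ _ hfacne]
        ring
  exact sub_eq_zero.mp hzero

/-! ### Main theorem -/

lemma eval_diag_comb (n α : ℕ) (c : ℕ → ℚ) (m' : ℕ) (hm' : m' ≤ n) :
    MvPolynomial.eval ![(α : ℚ) + m', ((n - m' : ℕ) : ℚ)]
        (∑ m ∈ range (n+1), MvPolynomial.C (c m) * Em n α m)
      = c m' * ((m'.factorial * (n - m').factorial : ℕ) : ℚ) := by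
  rw [eval_comb, Finset.sum_eq_single m']
  · rw [Em_diag n α m' m' (n - m') (by omega) (by omega), if_pos rfl]
  · intro m hm hne
    rw [Finset.mem_range] at hm
    rw [Em_diag n α m m' (n - m') (by omega) (by omega), if_neg (by omega), mul_zero]
  · intro h
    exact absurd (Finset.mem_range.mpr (by omega)) h

/-- the space of polynomials of total degree `≤ n` vanishing at all
points of `Q = {(α+i, j) : 0 ≤ i ≤ n-1, 0 ≤ j ≤ n-1-i}` and at the points
`P_k = (0, β+k)` for `0 ≤ k ≤ n-1` has dimension exactly `1`: there is a nonzero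
such polynomial, unique up to scaling. -/
theorem interpolation_space_dim_one (n α β : ℕ) (hn : 1 ≤ n) (hα : 1 ≤ α) :
    ∃ f₀ : MvPolynomial (Fin 2) ℚ, f₀ ≠ 0 ∧
      (f₀.totalDegree ≤ n ∧
        (∀ a b : ℕ, a + b ≤ n - 1 →
          MvPolynomial.eval ![(α : ℚ) + (a : ℚ), (b : ℚ)] f₀ = 0) ∧
        (∀ k : ℕ, k ≤ n - 1 →
          MvPolynomial.eval ![(0 : ℚ), (β : ℚ) + (k : ℚ)] f₀ = 0)) ∧
      ∀ f : MvPolynomial (Fin 2) ℚ, f.totalDegree ≤ n →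
        (∀ a b : ℕ, a + b ≤ n - 1 →
          MvPolynomial.eval ![(α : ℚ) + (a : ℚ), (b : ℚ)] f = 0) →
        (∀ k : ℕ, k ≤ n - 1 →
          MvPolynomial.eval ![(0 : ℚ), (β : ℚ) + (k : ℚ)] f = 0) →
        ∃ c : ℚ, f = c • f₀ := by
  obtain ⟨cF, hcFne, hcFker⟩ := exists_c0 n α β
  set c0 : ℕ → ℚ := cext cF with hc0def
  set f₀ : MvPolynomial (Fin 2) ℚ := ∑ m ∈ range (n+1), MvPolynomial.C (c0 m) * Em n α m
    with hf₀
  have hzero_of : (∀ m, m ≤ n → c0 m = 0) → False := by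
    intro hall
    apply hcFne
    funext i
    have := hall i.1 (by omega)
    rwa [hc0def, cext, dif_pos i.isLt, Fin.eta] at this
  have hf₀ne : f₀ ≠ 0 := by
    intro h
    apply hzero_of
    intro m' hm'
    have hd := eval_diag_comb n α c0 m' hm'
    rw [← hf₀, h, map_zero] at hd
    have hfacne : ((m'.factorial * (n - m').factorial : ℕ) : ℚ) ≠ 0 := by
      exact_mod_cast Nat.mul_ne_zero m'.factorial_ne_zero (n - m').factorial_ne_zero
    field_simp at hd
    exact (mul_eq_zero.mp hd.symm).resolve_right hfacne
  have hf₀deg : f₀.totalDegree ≤ n := by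
    rw [hf₀]
    apply MvPolynomial.totalDegree_finsetSum_le
    intro m hm
    rw [Finset.mem_range] at hm
    refine (MvPolynomial.totalDegree_mul _ _).trans ?_
    rw [MvPolynomial.totalDegree_C]
    simpa using totalDegree_Em n α m (by omega)
  have hf₀Q : ∀ a b : ℕ, a + b ≤ n - 1 →
      MvPolynomial.eval ![(α : ℚ) + (a : ℚ), (b : ℚ)] f₀ = 0 := by
    intro a b hab
    rw [hf₀, eval_comb, Finset.sum_eq_zero]
    intro m _
    rw [Em_vanish_Q n α m a b (by omega), mul_zero]
  have hf₀P : ∀ k : ℕ, k ≤ n - 1 →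
      MvPolynomial.eval ![(0 : ℚ), (β : ℚ) + (k : ℚ)] f₀ = 0 := by
    intro k hk
    have hsum : MvPolynomial.eval ![(0 : ℚ), (β : ℚ) + (k : ℚ)] f₀
        = ∑ m ∈ range (n+1), c0 m * (Am α m * (ffp (n - m)).eval ((β : ℚ) + k)) := by
      rw [hf₀, eval_comb]
      exact Finset.sum_congr rfl fun m _ => by rw [Em_line]
    rw [hsum]
    exact hcFker k (by omega)
  refine ⟨f₀, hf₀ne, ⟨hf₀deg, hf₀Q, hf₀P⟩, ?_⟩
  intro f hfdeg hfQ hfP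
  have hrep := represent n α hn f hfdeg hfQ
  set cf : ℕ → ℚ := fun m => MvPolynomial.eval ![(α : ℚ) + m, ((n - m : ℕ) : ℚ)] f
    / ((m.factorial * (n - m).factorial : ℕ) : ℚ) with hcf
  have hrep' : f = ∑ m ∈ range (n+1), MvPolynomial.C (cf m) * Em n α m := by
    rw [hrep]
  have hfker : ∀ k : ℕ, k < n →
      ∑ m ∈ range (n+1), (cf m * Am α m) * (ffp (n - m)).eval ((β : ℚ) + k) = 0 := by
    intro k hk
    have h1 := hfP k (by omega)
    rw [hrep'] at h1
    rw [eval_comb] at h1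
    refine Eq.trans ?_ h1
    refine Finset.sum_congr rfl fun m _ => ?_
    rw [Em_line]
    ring
  have hkerF : ∀ k : ℕ, k < n →
      ∑ m ∈ range (n+1), (c0 m * Am α m) * (ffp (n - m)).eval ((β : ℚ) + k) = 0 := by
    intro k hk
    refine Eq.trans ?_ (hcFker k hk)
    exact Finset.sum_congr rfl fun m _ => by ring
  have hc00 : c0 0 ≠ 0 := by
    intro h0
    exact hzero_of (kernel_claim n α β hn hα c0 hkerF h0)
  set e : ℚ := cf 0 / c0 0 with he
  have hprop : ∀ m, m ≤ n → cf m - e * c0 m = 0 := by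
    apply kernel_claim n α β hn hα (fun m => cf m - e * c0 m)
    · intro k hk
      have hsub : ∀ m ∈ range (n+1),
          ((cf m - e * c0 m) * Am α m) * (ffp (n - m)).eval ((β : ℚ) + k)
            = (cf m * Am α m) * (ffp (n - m)).eval ((β : ℚ) + k)
              - e * ((c0 m * Am α m) * (ffp (n - m)).eval ((β : ℚ) + k)) := by
        intro m _
        ring
      rw [Finset.sum_congr rfl hsub, Finset.sum_sub_distrib, hfker k hk, ← Finset.mul_sum,
        hkerF k hk, mul_zero, sub_zero]
    · show cf 0 - e * c0 0 = 0
      rw [he, div_mul_cancel₀ _ hc00, sub_self]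
  refine ⟨e, ?_⟩
  rw [hrep', MvPolynomial.smul_eq_C_mul, hf₀, Finset.mul_sum]
  refine Finset.sum_congr rfl fun m hm => ?_
  rw [Finset.mem_range] at hm
  have h := hprop m (by omega)
  have h2 : cf m = e * c0 m := by linarith
  rw [h2, ← mul_assoc, ← MvPolynomial.C_mul]
end

section
/- Let f ∈ ℚ[x,y] be any nonzero polynomial of total degree ≤ n with f(q) = 0 for all q ∈ Q and f(P_k) = 0 for all 0 ≤ k ≤ n−1. Then f(L) = 0 if and only if n·β = (n+1)·α. -/
open Finset Polynomial


lemma prod_add_one (n : ℕ) : ∏ m ∈ range n, ((m:ℚ) + 1) = n.factorial := by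
  induction n with
  | zero => simp
  | succ n ih => rw [prod_range_succ, ih, Nat.factorial_succ]; push_cast; ring

lemma prod_add_two (n : ℕ) : ∏ m ∈ range n, ((m:ℚ) + 2) = (n+1).factorial := by
  induction n with
  | zero => simp
  | succ n ih =>
    rw [prod_range_succ, ih, Nat.factorial_succ (n+1)]; push_cast; ring

lemma prod_desc1 (n : ℕ) : ∏ m ∈ range n, ((n:ℚ) - m) = n.factorial := by
  have h := Finset.prod_range_reflect (fun j => (j:ℚ) + 1) n
  rw [← prod_add_one n, ← h]
  apply Finset.prod_congr rfl
  intro j hj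
  have hjn : j < n := Finset.mem_range.mp hj
  have : ((n - 1 - j : ℕ) : ℚ) = (n:ℚ) - 1 - j := by
    have h1 : 1 + j ≤ n := by omega
    push_cast [Nat.sub_sub, Nat.cast_sub h1]
    ring
  rw [this]; ring

lemma prod_desc2 (n : ℕ) : ∏ m ∈ range n, ((n:ℚ) + 1 - m) = (n+1).factorial := by
  have h := Finset.prod_range_reflect (fun j => (j:ℚ) + 2) n
  rw [← prod_add_two n, ← h]
  apply Finset.prod_congr rfl
  intro j hj
  have hjn : j < n := Finset.mem_range.mp hj
  have : ((n - 1 - j : ℕ) : ℚ) = (n:ℚ) - 1 - j := by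
    have h1 : 1 + j ≤ n := by omega
    push_cast [Nat.sub_sub, Nat.cast_sub h1]
    ring
  rw [this]; ring


lemma vand (b y : ℚ) : ∀ n : ℕ,
    ∑ k ∈ range (n+1), (-1:ℚ)^k * (n.choose k : ℚ) * (∏ t ∈ range k, (b + t))
      * (∏ t ∈ range (n-k), (y - t)) = ∏ m ∈ range n, (y - b - m) := by
  intro n
  induction n with
  | zero => simp
  | succ n ih =>
    have step1 : ∑ k ∈ range (n+1+1), (-1:ℚ)^k * ((n+1).choose k : ℚ)
          * (∏ t ∈ range k, (b + t)) * (∏ t ∈ range (n+1-k), (y - t))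
        = (∑ k ∈ range (n+1), (-1:ℚ)^(k+1) * ((n+1).choose (k+1) : ℚ)
          * (∏ t ∈ range (k+1), (b + t)) * (∏ t ∈ range (n-k), (y - t)))
          + ∏ t ∈ range (n+1), (y - t) := by
      rw [Finset.sum_range_succ']
      simp [Nat.succ_sub_succ]
    have split : ∀ k ∈ range (n+1),
        (-1:ℚ)^(k+1) * ((n+1).choose (k+1) : ℚ)
          * (∏ t ∈ range (k+1), (b + t)) * (∏ t ∈ range (n-k), (y - t))
        = ((-1:ℚ)^(k+1) * (n.choose (k+1) : ℚ)
            * (∏ t ∈ range (k+1), (b + t)) * (∏ t ∈ range (n-k), (y - t)))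
          + ((-1:ℚ)^(k+1) * (n.choose k : ℚ)
            * (∏ t ∈ range (k+1), (b + t)) * (∏ t ∈ range (n-k), (y - t))) := by
      intro k hk
      rw [Nat.choose_succ_succ]
      push_cast
      ring
    have e2 : (∑ k ∈ range (n+1), (-1:ℚ)^(k+1) * (n.choose (k+1) : ℚ)
          * (∏ t ∈ range (k+1), (b + t)) * (∏ t ∈ range (n-k), (y - t)))
          + ∏ t ∈ range (n+1), (y - t)
        = ∑ k ∈ range (n+1), (-1:ℚ)^k * (n.choose k : ℚ)
          * (∏ t ∈ range k, (b + t)) * (∏ t ∈ range (n+1-k), (y - t)) := by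
      have h1 := Finset.sum_range_succ (fun k => (-1:ℚ)^k * (n.choose k : ℚ)
          * (∏ t ∈ range k, (b + t)) * (∏ t ∈ range (n+1-k), (y - t))) (n+1)
      have h2 := Finset.sum_range_succ' (fun k => (-1:ℚ)^k * (n.choose k : ℚ)
          * (∏ t ∈ range k, (b + t)) * (∏ t ∈ range (n+1-k), (y - t))) (n+1)
      rw [h2] at h1
      simp only [Nat.choose_succ_self, Nat.cast_zero, mul_zero, zero_mul, add_zero,
        Nat.succ_sub_succ, Nat.choose_zero_right, Nat.cast_one, pow_zero, one_mul, mul_one,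
        Finset.prod_range_zero, Nat.sub_zero] at h1
      linarith [h1]
    have combine : ∀ k ∈ range (n+1),
        ((-1:ℚ)^k * (n.choose k : ℚ)
          * (∏ t ∈ range k, (b + t)) * (∏ t ∈ range (n+1-k), (y - t)))
        + ((-1:ℚ)^(k+1) * (n.choose k : ℚ)
          * (∏ t ∈ range (k+1), (b + t)) * (∏ t ∈ range (n-k), (y - t)))
        = (y - b - n) * ((-1:ℚ)^k * (n.choose k : ℚ)
          * (∏ t ∈ range k, (b + t)) * (∏ t ∈ range (n-k), (y - t))) := by
      intro k hk
      have hkn : k ≤ n := by simpa using Nat.lt_succ_iff.mp (Finset.mem_range.mp hk)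
      have h3 : n + 1 - k = (n - k) + 1 := by omega
      rw [h3, prod_range_succ, prod_range_succ]
      have hc : ((n - k : ℕ) : ℚ) = (n : ℚ) - (k : ℚ) := by
        push_cast [Nat.cast_sub hkn]; ring
      rw [hc]
      ring
    calc ∑ k ∈ range (n+1+1), (-1:ℚ)^k * ((n+1).choose k : ℚ)
          * (∏ t ∈ range k, (b + t)) * (∏ t ∈ range (n+1-k), (y - t))
        = (∑ k ∈ range (n+1), (-1:ℚ)^(k+1) * ((n+1).choose (k+1) : ℚ)
          * (∏ t ∈ range (k+1), (b + t)) * (∏ t ∈ range (n-k), (y - t)))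
          + ∏ t ∈ range (n+1), (y - t) := step1
      _ = ((∑ k ∈ range (n+1), (-1:ℚ)^(k+1) * (n.choose (k+1) : ℚ)
          * (∏ t ∈ range (k+1), (b + t)) * (∏ t ∈ range (n-k), (y - t)))
          + (∑ k ∈ range (n+1), (-1:ℚ)^(k+1) * (n.choose k : ℚ)
          * (∏ t ∈ range (k+1), (b + t)) * (∏ t ∈ range (n-k), (y - t))))
          + ∏ t ∈ range (n+1), (y - t) := by
          rw [Finset.sum_congr rfl split, Finset.sum_add_distrib]
      _ = ((∑ k ∈ range (n+1), (-1:ℚ)^(k+1) * (n.choose (k+1) : ℚ)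
          * (∏ t ∈ range (k+1), (b + t)) * (∏ t ∈ range (n-k), (y - t)))
          + ∏ t ∈ range (n+1), (y - t))
          + (∑ k ∈ range (n+1), (-1:ℚ)^(k+1) * (n.choose k : ℚ)
          * (∏ t ∈ range (k+1), (b + t)) * (∏ t ∈ range (n-k), (y - t))) := by ring
      _ = (∑ k ∈ range (n+1), (-1:ℚ)^k * (n.choose k : ℚ)
          * (∏ t ∈ range k, (b + t)) * (∏ t ∈ range (n+1-k), (y - t)))
          + (∑ k ∈ range (n+1), (-1:ℚ)^(k+1) * (n.choose k : ℚ)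
          * (∏ t ∈ range (k+1), (b + t)) * (∏ t ∈ range (n-k), (y - t))) := by rw [e2]
      _ = ∑ k ∈ range (n+1), (((-1:ℚ)^k * (n.choose k : ℚ)
          * (∏ t ∈ range k, (b + t)) * (∏ t ∈ range (n+1-k), (y - t)))
          + ((-1:ℚ)^(k+1) * (n.choose k : ℚ)
          * (∏ t ∈ range (k+1), (b + t)) * (∏ t ∈ range (n-k), (y - t)))) := by
          rw [Finset.sum_add_distrib]
      _ = ∑ k ∈ range (n+1), (y - b - n) * ((-1:ℚ)^k * (n.choose k : ℚ)
          * (∏ t ∈ range k, (b + t)) * (∏ t ∈ range (n-k), (y - t))) :=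
          Finset.sum_congr rfl combine
      _ = (y - b - n) * ∑ k ∈ range (n+1), ((-1:ℚ)^k * (n.choose k : ℚ)
          * (∏ t ∈ range k, (b + t)) * (∏ t ∈ range (n-k), (y - t))) := by
          rw [Finset.mul_sum]
      _ = (y - b - n) * ∏ m ∈ range n, (y - b - m) := by rw [ih]
      _ = ∏ m ∈ range (n+1), (y - b - m) := by rw [prod_range_succ]; ring


noncomputable def ev (P : Polynomial (Polynomial ℚ)) (x y : ℚ) : ℚ :=
  (P.eval (Polynomial.C x)).eval y

lemma ev_mul (P Q : Polynomial (Polynomial ℚ)) (x y : ℚ) :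
    ev (P * Q) x y = ev P x y * ev Q x y := by
  simp [ev]

lemma ev_lin (a x y : ℚ) : ev (X - C (C a)) x y = x - a := by
  simp [ev]

lemma tri_unique : ∀ (n : ℕ) (P : Polynomial (Polynomial ℚ)) (x : ℕ → ℚ) (y : ℕ → ℕ → ℚ),
    (∀ i ≤ n, ∀ j ≤ n, i ≠ j → x i ≠ x j) →
    (∀ i ≤ n, ∀ j ≤ n - i, ∀ k ≤ n - i, j ≠ k → y i j ≠ y i k) →
    (∀ i, P.coeff i ≠ 0 → (P.coeff i).natDegree + i ≤ n) →
    (∀ i j, i + j ≤ n → ev P (x i) (y i j) = 0) → P = 0 := by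
  intro n
  induction n with
  | zero =>
    intro P x y hx hy hdeg hv
    have hnd : P.natDegree ≤ 0 := by
      rw [Polynomial.natDegree_le_iff_coeff_eq_zero]
      intro m hm
      by_contra hc
      have := hdeg m hc; omega
    have hP : P = C (P.coeff 0) := Polynomial.eq_C_of_natDegree_le_zero hnd
    by_cases hc : P.coeff 0 = 0
    · rw [hP, hc, map_zero]
    have hnd2 : (P.coeff 0).natDegree ≤ 0 := by
      have := hdeg 0 hc; omega
    have hP2 : P.coeff 0 = C ((P.coeff 0).coeff 0) :=
      Polynomial.eq_C_of_natDegree_le_zero hnd2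
    have := hv 0 0 (by omega)
    rw [hP, hP2] at this
    simp [ev] at this
    rw [hP, hP2, this]
    simp
  | succ n ih =>
    intro P x y hx hy hdeg hv
    -- the slice at x 0 vanishes
    set q : Polynomial ℚ := P.eval (Polynomial.C (x 0)) with hq
    have hqdeg : q.natDegree ≤ n + 1 := by
      rw [hq, Polynomial.eval_eq_sum_range]
      apply Polynomial.natDegree_sum_le_of_forall_le
      intro i _
      apply (Polynomial.natDegree_mul_le).trans
      by_cases hc : P.coeff i = 0
      · simp [hc]
      · have := hdeg i hc
        simp [Polynomial.natDegree_pow, Polynomial.natDegree_C]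
        omega
    have hq0 : q = 0 := by
      apply Polynomial.eq_zero_of_natDegree_lt_card_of_eval_eq_zero q
        (f := fun j : Fin (n+2) => y 0 j)
      · intro a b hab
        by_contra hne
        exact (hy 0 (by omega) a (by omega) b (by omega)
          (fun h => hne (Fin.ext h))) hab
      · intro j
        have := hv 0 j (by omega)
        simpa [ev, hq] using this
      · have : Fintype.card (Fin (n+2)) = n + 2 := by simp
        omega
    have hroot : Polynomial.IsRoot P (Polynomial.C (x 0)) := hq0
    obtain ⟨R, hR⟩ := (Polynomial.dvd_iff_isRoot.mpr hroot)
    by_cases hRz : R = 0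
    · rw [hR, hRz, mul_zero]
    -- coefficient recursion
    have hcoeff : ∀ i, R.coeff i = P.coeff (i+1) + (Polynomial.C (x 0)) * R.coeff (i+1) := by
      intro i
      have : P.coeff (i+1) = R.coeff i - (Polynomial.C (x 0)) * R.coeff (i+1) := by
        rw [hR, sub_mul, Polynomial.coeff_sub, Polynomial.coeff_X_mul, Polynomial.coeff_C_mul]
      rw [this]; ring
    -- degree of R
    have hPnd : P.natDegree ≤ n + 1 := by
      rw [Polynomial.natDegree_le_iff_coeff_eq_zero]
      intro m hm
      by_contra hc
      have := hdeg m hc; omega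
    have hRnd : R.natDegree ≤ n := by
      have hm : (X - Polynomial.C (Polynomial.C (x 0))).Monic := Polynomial.monic_X_sub_C _
      have := hm.natDegree_mul' hRz
      rw [← hR] at this
      rw [Polynomial.natDegree_X_sub_C] at this
      omega
    have hRtop : ∀ i, n < i → R.coeff i = 0 := by
      intro i hi
      exact Polynomial.coeff_eq_zero_of_natDegree_lt (lt_of_le_of_lt hRnd hi)
    have hRdeg : ∀ k i, n + 1 ≤ i + k → (R.coeff i = 0 ∨ (R.coeff i).natDegree + i ≤ n) := by
      intro k
      induction k with
      | zero => intro i hi; exact Or.inl (hRtop i (by omega))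
      | succ k ihk =>
        intro i hik
        by_cases hcase : n + 1 ≤ i + k
        · exact ihk i hcase
        · have hieq : i + k = n := by omega
          have hd1 : (P.coeff (i+1)).natDegree ≤ n - i := by
            by_cases hc : P.coeff (i+1) = 0
            · simp [hc]
            · have := hdeg (i+1) hc; omega
          have hd2 : ((Polynomial.C (x 0)) * R.coeff (i+1)).natDegree ≤ n - i := by
            rcases ihk (i+1) (by omega) with h | h
            · simp [h]
            · apply (Polynomial.natDegree_mul_le).trans
              simp [Polynomial.natDegree_C]
              omega
          right
          have : (R.coeff i).natDegree ≤ n - i := by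
            rw [hcoeff i]
            exact (Polynomial.natDegree_add_le _ _).trans (by omega)
          omega
    -- apply induction hypothesis to R
    have hR0 : R = 0 := by
      apply ih R (fun i => x (i+1)) (fun i j => y (i+1) j)
      · intro i hi j hj hij
        exact hx (i+1) (by omega) (j+1) (by omega) (by omega)
      · intro i hi j hj k hk hjk
        exact hy (i+1) (by omega) j (by omega) k (by omega) hjk
      · intro i hc
        rcases hRdeg (n+1) i (by omega) with h | h
        · exact absurd h hc
        · exact h
      · intro i j hij
        have hv1 := hv (i+1) j (by omega)
        rw [hR, ev_mul, ev_lin] at hv1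
        have hne : x (i+1) - x 0 ≠ 0 := by
          have := hx (i+1) (by omega) 0 (by omega) (by omega)
          intro h; apply this; linarith
        exact (mul_eq_zero.mp hv1).resolve_left hne
    exact absurd hR0 hRz



noncomputable def toQR : MvPolynomial (Fin 0) ℚ →+* ℚ :=
  (MvPolynomial.isEmptyAlgEquiv ℚ (Fin 0)).toAlgHom.toRingHom

noncomputable def toQ : MvPolynomial (Fin 1) ℚ →+* Polynomial ℚ :=
  (Polynomial.mapRingHom toQR).comp (MvPolynomial.finSuccEquiv ℚ 0).toAlgHom.toRingHom

lemma toQ_apply (p : MvPolynomial (Fin 1) ℚ) :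
    toQ p = Polynomial.map toQR (MvPolynomial.finSuccEquiv ℚ 0 p) := rfl

lemma toQ_injective : Function.Injective toQ := by
  intro a b hab
  rw [toQ_apply, toQ_apply] at hab
  exact (MvPolynomial.finSuccEquiv ℚ 0).injective
    (Polynomial.map_injective _ (MvPolynomial.isEmptyAlgEquiv ℚ (Fin 0)).injective hab)

lemma toQ_natDegree (p : MvPolynomial (Fin 1) ℚ) : (toQ p).natDegree ≤ p.totalDegree := by
  rw [toQ_apply]
  refine (Polynomial.natDegree_map_le).trans ?_
  rw [Polynomial.natDegree_le_iff_coeff_eq_zero]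
  intro m hm
  by_contra hc
  have := MvPolynomial.totalDegree_coeff_finSuccEquiv_add_le p m hc
  omega

noncomputable def toPP (f : MvPolynomial (Fin 2) ℚ) : Polynomial (Polynomial ℚ) :=
  Polynomial.map toQ (MvPolynomial.finSuccEquiv ℚ 1 f)

lemma toPP_injective : Function.Injective toPP := by
  intro a b hab
  exact (MvPolynomial.finSuccEquiv ℚ 1).injective
    (Polynomial.map_injective _ toQ_injective hab)

lemma toPP_coeff_natDegree {f : MvPolynomial (Fin 2) ℚ} (i : ℕ)
    (h : ((toPP f).coeff i) ≠ 0) : ((toPP f).coeff i).natDegree + i ≤ f.totalDegree := by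
  rw [toPP, Polynomial.coeff_map] at h ⊢
  have h2 : (MvPolynomial.finSuccEquiv ℚ 1 f).coeff i ≠ 0 := by
    intro hz; rw [hz] at h; simp at h
  have h3 := MvPolynomial.totalDegree_coeff_finSuccEquiv_add_le f i h2
  have h4 := toQ_natDegree ((MvPolynomial.finSuccEquiv ℚ 1 f).coeff i)
  omega

noncomputable def evPP (x y : ℚ) : MvPolynomial (Fin 2) ℚ →+* ℚ :=
  ((Polynomial.evalRingHom y).comp (Polynomial.evalRingHom (Polynomial.C x))).comp
    ((Polynomial.mapRingHom toQ).comp (MvPolynomial.finSuccEquiv ℚ 1).toAlgHom.toRingHom)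

lemma evPP_apply (f : MvPolynomial (Fin 2) ℚ) (x y : ℚ) :
    evPP x y f = ev (toPP f) x y := rfl

lemma ev_toPP (f : MvPolynomial (Fin 2) ℚ) (x y : ℚ) :
    ev (toPP f) x y = MvPolynomial.eval ![x, y] f := by
  rw [← evPP_apply]
  have : evPP x y = (MvPolynomial.eval ![x, y]) := by
    apply MvPolynomial.ringHom_ext
    · intro r
      simp [evPP, toQ_apply, toQR, MvPolynomial.finSuccEquiv_apply]
      exact (MvPolynomial.coeff_C _ _).trans (if_pos (Subsingleton.elim _ _))
    · intro i
      refine Fin.cases ?_ ?_ i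
      · simp [evPP, toQ_apply, MvPolynomial.finSuccEquiv_X_zero]
      · intro j
        have hj : j = 0 := Subsingleton.elim _ _
        subst hj
        have h2 : (MvPolynomial.finSuccEquiv ℚ 1) (MvPolynomial.X 1)
            = Polynomial.C (MvPolynomial.X 0) := by
          simpa using MvPolynomial.finSuccEquiv_X_succ (R := ℚ) (n := 1) (j := 0)
        simp [evPP, toQ_apply, h2, MvPolynomial.finSuccEquiv_X_zero]
  rw [this]




noncomputable def Fp (n α β : ℕ) : MvPolynomial (Fin 2) ℚ :=
  ∑ k ∈ range (n+1), MvPolynomial.C ((n.choose k : ℚ) * (∏ t ∈ range k, ((β:ℚ)+t))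
      * (∏ t ∈ range (n-k), ((α:ℚ)+k+t))) *
    ((∏ t ∈ range k, (MvPolynomial.X 0 - MvPolynomial.C ((α:ℚ) + t))) *
     (∏ t ∈ range (n-k), (MvPolynomial.X 1 - MvPolynomial.C (t:ℚ))))

lemma Fp_eval (n α β : ℕ) (x y : ℚ) :
    MvPolynomial.eval ![x, y] (Fp n α β)
      = ∑ k ∈ range (n+1), (n.choose k : ℚ) * (∏ t ∈ range k, ((β:ℚ)+t))
          * (∏ t ∈ range (n-k), ((α:ℚ)+k+t))
          * ((∏ t ∈ range k, (x - ((α:ℚ) + t))) * (∏ t ∈ range (n-k), (y - t))) := by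
  rw [Fp, map_sum]
  apply Finset.sum_congr rfl
  intro k hk
  simp

lemma tdeg_lin (i : Fin 2) (a : ℚ) :
    (MvPolynomial.X i - MvPolynomial.C a).totalDegree ≤ 1 := by
  rw [sub_eq_add_neg, ← MvPolynomial.C_neg]
  refine (MvPolynomial.totalDegree_add _ _).trans ?_
  simp [MvPolynomial.totalDegree_X, MvPolynomial.totalDegree_C]

lemma Fp_totalDegree (n α β : ℕ) : (Fp n α β).totalDegree ≤ n := by
  rw [Fp]
  refine (MvPolynomial.totalDegree_finset_sum _ _).trans ?_
  apply Finset.sup_le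
  intro k hk
  have hk' : k ≤ n := by have := Finset.mem_range.mp hk; omega
  refine (MvPolynomial.totalDegree_mul _ _).trans ?_
  rw [MvPolynomial.totalDegree_C]
  rw [zero_add]
  refine (MvPolynomial.totalDegree_mul _ _).trans ?_
  have h1 : (∏ t ∈ range k, (MvPolynomial.X (0:Fin 2) - MvPolynomial.C ((α:ℚ) + t))).totalDegree ≤ k := by
    refine (MvPolynomial.totalDegree_finset_prod _ _).trans ?_
    refine le_trans (Finset.sum_le_sum (g := fun _ => 1) (fun t _ => tdeg_lin _ _)) ?_
    simp
  have h2 : (∏ t ∈ range (n-k), (MvPolynomial.X (1:Fin 2) - MvPolynomial.C (t:ℚ))).totalDegree ≤ n - k := by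
    refine (MvPolynomial.totalDegree_finset_prod _ _).trans ?_
    refine le_trans (Finset.sum_le_sum (g := fun _ => 1) (fun t _ => tdeg_lin _ _)) ?_
    simp
  omega

lemma Fp_vanish_Q (n α β : ℕ) (i j : ℕ) (hij : i + j < n) :
    MvPolynomial.eval ![(α:ℚ) + i, (j:ℚ)] (Fp n α β) = 0 := by
  rw [Fp_eval]
  apply Finset.sum_eq_zero
  intro k hk
  have hk' : k ≤ n := by have := Finset.mem_range.mp hk; omega
  by_cases hik : i < k
  · have : (∏ t ∈ range k, ((α:ℚ) + i - ((α:ℚ) + t))) = 0 := by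
      apply Finset.prod_eq_zero (Finset.mem_range.mpr hik)
      ring
    rw [this]
    ring
  · have hjk : j < n - k := by omega
    have : (∏ t ∈ range (n-k), ((j:ℚ) - t)) = 0 := by
      apply Finset.prod_eq_zero (Finset.mem_range.mpr hjk)
      ring
    rw [this]
    ring

lemma Fp_line (n α β : ℕ) (y : ℚ) :
    MvPolynomial.eval ![0, y] (Fp n α β)
      = (∏ t ∈ range n, ((α:ℚ)+t)) * ∏ m ∈ range n, (y - β - m) := by
  rw [Fp_eval, ← vand (β:ℚ) y n, Finset.mul_sum]
  apply Finset.sum_congr rfl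
  intro k hk
  have hk' : k ≤ n := by have := Finset.mem_range.mp hk; omega
  have h1 : (∏ t ∈ range k, ((0:ℚ) - ((α:ℚ) + t))) = (-1:ℚ)^k * ∏ t ∈ range k, ((α:ℚ)+t) := by
    have hc : ∀ t ∈ range k, (0:ℚ) - ((α:ℚ)+t) = (-1) * ((α:ℚ)+t) := by intros; ring
    rw [Finset.prod_congr rfl hc, Finset.prod_mul_distrib, Finset.prod_const, Finset.card_range]
  have h2 : (∏ t ∈ range k, ((α:ℚ)+t)) * (∏ t ∈ range (n-k), ((α:ℚ)+k+t))
      = ∏ t ∈ range n, ((α:ℚ)+t) := by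
    have hsplit : k + (n - k) = n := by omega
    have e1 : (∏ t ∈ range (n-k), ((α:ℚ)+k+t)) = ∏ t ∈ range (n-k), ((α:ℚ)+((k+t:ℕ):ℚ)) := by
      apply Finset.prod_congr rfl; intro t ht; push_cast; ring
    rw [e1, ← Finset.prod_range_add (fun t => (α:ℚ)+(t:ℚ)) k (n-k), hsplit]
  rw [h1]
  linear_combination ((-1:ℚ)^k * (n.choose k : ℚ) * (∏ t ∈ range k, ((β:ℚ)+t))
    * (∏ t ∈ range (n-k), (y - t))) * h2

lemma Fp_at_L (n α β : ℕ) (hn : 1 ≤ n) :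
    MvPolynomial.eval ![(-1:ℚ), (β:ℚ)+n+1] (Fp n α β)
      = (∏ t ∈ range (n-1), ((α:ℚ)+1+t)) * (n.factorial : ℚ) * (((n:ℚ)+1)*α - n*β) := by
  rw [Fp_eval]
  set M : ℚ := ∏ t ∈ range (n-1), ((α:ℚ)+1+t) with hM
  have key : ∀ k ∈ range (n+1),
      (n.choose k : ℚ) * (∏ t ∈ range k, ((β:ℚ)+t)) * (∏ t ∈ range (n-k), ((α:ℚ)+k+t))
        * ((∏ t ∈ range k, ((-1:ℚ) - ((α:ℚ) + t))) * (∏ t ∈ range (n-k), ((β:ℚ)+n+1 - t)))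
      = M * α * ((-1:ℚ)^k * (n.choose k : ℚ) * (∏ t ∈ range k, ((β:ℚ)+t))
          * (∏ t ∈ range (n-k), ((β:ℚ)+n+1 - t)))
        + M * ((k:ℚ) * ((-1:ℚ)^k * (n.choose k : ℚ) * (∏ t ∈ range k, ((β:ℚ)+t))
          * (∏ t ∈ range (n-k), ((β:ℚ)+n+1 - t)))) := by
    intro k hk
    have hk' : k ≤ n := by have := Finset.mem_range.mp hk; omega
    have h1 : (∏ t ∈ range k, ((-1:ℚ) - ((α:ℚ) + t))) = (-1:ℚ)^k * ∏ t ∈ range k, ((α:ℚ)+1+t) := by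
      have hc : ∀ t ∈ range k, (-1:ℚ) - ((α:ℚ)+t) = (-1) * ((α:ℚ)+1+t) := by intros; ring
      rw [Finset.prod_congr rfl hc, Finset.prod_mul_distrib, Finset.prod_const, Finset.card_range]
    have h2 : (∏ t ∈ range k, ((α:ℚ)+1+t)) * (∏ t ∈ range (n-k), ((α:ℚ)+k+t))
        = ((α:ℚ)+k) * M := by
      by_cases hkn : k = n
      · subst hkn
        have hn1 : k = (k-1) + 1 := by omega
        rw [Nat.sub_self]
        rw [Finset.prod_range_zero, mul_one]
        conv_lhs => rw [hn1, Finset.prod_range_succ]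
        have : ((k-1:ℕ):ℚ) = (k:ℚ) - 1 := by
          push_cast [Nat.cast_sub (by omega : 1 ≤ k)]; ring
        rw [this, hM]
        ring
      · have hkn' : k < n := by omega
        have hsub : n - k = (n-1-k) + 1 := by omega
        rw [hsub, Finset.prod_range_succ']
        have e1 : (∏ t ∈ range (n-1-k), ((α:ℚ)+k+(t+1:ℕ))) 
            = ∏ t ∈ range (n-1-k), (((α:ℚ)+1)+((k+t:ℕ):ℚ)) := by
          apply Finset.prod_congr rfl; intro t ht; push_cast; ring
        rw [e1]
        have e2 : (∏ t ∈ range k, ((α:ℚ)+1+t)) = ∏ t ∈ range k, (((α:ℚ)+1)+(t:ℚ)) := by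
          apply Finset.prod_congr rfl; intro t ht; ring
        rw [e2, ← mul_assoc, ← Finset.prod_range_add (fun t => ((α:ℚ)+1)+(t:ℚ)) k (n-1-k)]
        have hadd : k + (n-1-k) = n-1 := by omega
        rw [hadd, hM]
        push_cast
        ring
    rw [h1]
    linear_combination ((-1:ℚ)^k * (n.choose k : ℚ) * (∏ t ∈ range k, ((β:ℚ)+t))
      * (∏ t ∈ range (n-k), ((β:ℚ)+n+1 - t))) * h2
  rw [Finset.sum_congr rfl key, Finset.sum_add_distrib, ← Finset.mul_sum, ← Finset.mul_sum]
  have hS0 : ∑ k ∈ range (n+1), ((-1:ℚ)^k * (n.choose k : ℚ) * (∏ t ∈ range k, ((β:ℚ)+t))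
      * (∏ t ∈ range (n-k), ((β:ℚ)+n+1 - t))) = ((n+1).factorial : ℚ) := by
    rw [vand (β:ℚ) ((β:ℚ)+n+1) n]
    have hc : ∀ m ∈ range n, (β:ℚ)+n+1-β-m = ((n:ℚ)+1)-m := by intros; ring
    rw [Finset.prod_congr rfl hc, prod_desc2]
  have hS1 : ∑ k ∈ range (n+1), ((k:ℚ) * ((-1:ℚ)^k * (n.choose k : ℚ)
      * (∏ t ∈ range k, ((β:ℚ)+t)) * (∏ t ∈ range (n-k), ((β:ℚ)+n+1 - t))))
      = -(n:ℚ)*β*(n.factorial : ℚ) := by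
    rw [Finset.sum_range_succ']
    have step : ∀ k ∈ range n,
        ((k+1:ℕ):ℚ) * ((-1:ℚ)^(k+1) * (n.choose (k+1) : ℚ)
          * (∏ t ∈ range (k+1), ((β:ℚ)+t)) * (∏ t ∈ range (n-(k+1)), ((β:ℚ)+n+1 - t)))
        = (-(n:ℚ)*β) * ((-1:ℚ)^k * ((n-1).choose k : ℚ)
          * (∏ t ∈ range k, ((β:ℚ)+1+t)) * (∏ t ∈ range ((n-1)-k), ((β:ℚ)+n+1 - t))) := by
      intro k hk
      have hchoose : ((k+1:ℕ):ℚ) * ((n.choose (k+1)) : ℚ) = (n:ℚ) * (((n-1).choose k) : ℚ) := by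
        have h := Nat.add_one_mul_choose_eq (n-1) k
        have hn' : n - 1 + 1 = n := by omega
        rw [hn'] at h
        have h2 : (k+1) * n.choose (k+1) = n * ((n-1).choose k) := by rw [h]; ring
        exact_mod_cast h2
      have hPb : (∏ t ∈ range (k+1), ((β:ℚ)+t))
          = (∏ t ∈ range k, ((β:ℚ)+1+t)) * β := by
        rw [Finset.prod_range_succ']
        have hc : ∀ t ∈ range k, (β:ℚ)+((t+1:ℕ):ℚ) = (β:ℚ)+1+t := by
          intros; push_cast; ring
        rw [Finset.prod_congr rfl hc]
        norm_num
      have hz2 : n-(k+1) = (n-1)-k := by omega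
      rw [hPb, hz2]
      linear_combination ((-1:ℚ)^(k+1) * (∏ t ∈ range k, ((β:ℚ)+1+t)) * β
        * (∏ t ∈ range ((n-1)-k), ((β:ℚ)+n+1 - t))) * hchoose
    rw [Finset.sum_congr rfl step, ← Finset.mul_sum]
    have hrn : n = (n-1)+1 := by omega
    rw [congrArg range hrn, vand ((β:ℚ)+1) ((β:ℚ)+n+1) (n-1)]
    have hc2 : ∀ m ∈ range (n-1), (β:ℚ)+n+1-((β:ℚ)+1)-m = (((n-1):ℕ):ℚ)+1-m := by
      intro m hm
      rw [Nat.cast_sub hn]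
      push_cast
      ring
    rw [Finset.prod_congr rfl hc2, prod_desc2 (n-1), show (n-1)+1 = n from by omega]
    simp
  rw [hS0, hS1, Nat.factorial_succ]
  push_cast
  ring


/-- if `f` is a nonzero polynomial of total degree `≤ n` vanishing
at all points of `Q = {(α+i, j) : 0 ≤ i ≤ n-1, 0 ≤ j ≤ n-1-i}` and at the points
`P_k = (0, β+k)` for `0 ≤ k ≤ n-1`, then `f` vanishes at `L = (-1, β+n+1)` iff
`n·β = (n+1)·α`. -/
theorem vanishes_at_L_iff (n α β : ℕ) (hn : 1 ≤ n) (hα : 1 ≤ α)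
    (f : MvPolynomial (Fin 2) ℚ) (hf : f ≠ 0) (hdeg : f.totalDegree ≤ n)
    (hQ : ∀ a b : ℕ, a + b ≤ n - 1 →
      MvPolynomial.eval ![(α : ℚ) + (a : ℚ), (b : ℚ)] f = 0)
    (hP : ∀ k : ℕ, k ≤ n - 1 →
      MvPolynomial.eval ![(0 : ℚ), (β : ℚ) + (k : ℚ)] f = 0) :
    MvPolynomial.eval ![(-1 : ℚ), (β : ℚ) + (n : ℚ) + 1] f = 0 ↔
      n * β = (n + 1) * α := by
  set A : ℚ := ∏ t ∈ range n, ((α:ℚ)+t) with hA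
  have hApos : 0 < A := by
    apply Finset.prod_pos
    intro t _
    have h1 : (1:ℚ) ≤ (α:ℚ) := by exact_mod_cast hα
    have h2 : (0:ℚ) ≤ (t:ℚ) := Nat.cast_nonneg t
    linarith
  have hfact : (0:ℚ) < (n.factorial : ℚ) := by
    exact_mod_cast Nat.factorial_pos n
  set c : ℚ := MvPolynomial.eval ![0, (β:ℚ)+n] f / (A * n.factorial) with hc
  set h : MvPolynomial (Fin 2) ℚ := f - MvPolynomial.C c * Fp n α β with hh
  have hhdeg : h.totalDegree ≤ n := by
    rw [hh, sub_eq_add_neg]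
    refine (MvPolynomial.totalDegree_add _ _).trans ?_
    have h1 : (-(MvPolynomial.C c * Fp n α β)).totalDegree ≤ n := by
      have e1 : -(MvPolynomial.C c * Fp n α β) = MvPolynomial.C (-c) * Fp n α β := by
        rw [MvPolynomial.C_neg]; ring
      rw [e1]
      refine (MvPolynomial.totalDegree_mul _ _).trans ?_
      rw [MvPolynomial.totalDegree_C, zero_add]
      exact Fp_totalDegree n α β
    omega
  have hFn : MvPolynomial.eval ![0, (β:ℚ)+n] (Fp n α β) = A * n.factorial := by
    rw [Fp_line]
    have hcg : ∀ m ∈ range n, (β:ℚ)+n-β-m = (n:ℚ)-m := by intros; ring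
    rw [Finset.prod_congr rfl hcg, prod_desc1]
  have hzero : h = 0 := by
    have hPP : toPP h = 0 := by
      apply tri_unique n (toPP h)
        (fun i => if i = 0 then 0 else (α:ℚ) + ((i - 1 : ℕ):ℚ))
        (fun i j => if i = 0 then (β:ℚ) + (j:ℚ) else (j:ℚ))
      · intro i hi j hj hij
        by_cases hiz : i = 0 <;> by_cases hjz : j = 0
        · exact absurd (hiz.trans hjz.symm) hij
        · subst hiz
          intro hcontra
          have h1 : (1:ℚ) ≤ (α:ℚ) := by exact_mod_cast hα
          have h2 : (0:ℚ) ≤ ((j-1:ℕ):ℚ) := Nat.cast_nonneg _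
          simp only [if_neg hjz, reduceIte] at hcontra
          linarith [hcontra]
        · subst hjz
          intro hcontra
          have h1 : (1:ℚ) ≤ (α:ℚ) := by exact_mod_cast hα
          have h2 : (0:ℚ) ≤ ((i-1:ℕ):ℚ) := Nat.cast_nonneg _
          simp only [if_neg hiz, reduceIte] at hcontra
          linarith [hcontra]
        · intro hcontra
          simp only [if_neg hiz, if_neg hjz] at hcontra
          have hq : ((i-1:ℕ):ℚ) = ((j-1:ℕ):ℚ) := by linarith
          have : i - 1 = j - 1 := by exact_mod_cast hq
          exact hij (by omega)
      · intro i hi j hj k hk hjk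
        intro hcontra
        by_cases hiz : i = 0
        · simp only [hiz, reduceIte] at hcontra
          have : (j:ℚ) = k := by linarith
          exact hjk (by exact_mod_cast this)
        · simp only [if_neg hiz] at hcontra
          exact hjk (by exact_mod_cast hcontra)
      · intro i hi
        have := toPP_coeff_natDegree (f := h) i hi
        omega
      · intro i j hij
        rw [ev_toPP]
        rcases i with _ | i
        · simp only [reduceIte]
          have heval : MvPolynomial.eval ![(0:ℚ), (β:ℚ)+(j:ℚ)] h
              = MvPolynomial.eval ![(0:ℚ), (β:ℚ)+(j:ℚ)] f
                - c * MvPolynomial.eval ![(0:ℚ), (β:ℚ)+(j:ℚ)] (Fp n α β) := by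
            rw [hh]; simp
          by_cases hjn : j = n
          · subst hjn
            rw [heval, hFn, hc]
            field_simp
            ring
          · have hjn' : j ≤ n - 1 := by omega
            rw [heval, hP j hjn', Fp_line]
            have : (∏ m ∈ range n, ((β:ℚ)+j-β-m)) = 0 := by
              apply Finset.prod_eq_zero (Finset.mem_range.mpr (show j < n by omega))
              ring
            rw [this]
            ring
        · simp only [if_neg (Nat.succ_ne_zero i), Nat.add_sub_cancel]
          have heval : MvPolynomial.eval ![(α:ℚ)+(i:ℚ), (j:ℚ)] h
              = MvPolynomial.eval ![(α:ℚ)+(i:ℚ), (j:ℚ)] f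
                - c * MvPolynomial.eval ![(α:ℚ)+(i:ℚ), (j:ℚ)] (Fp n α β) := by
            rw [hh]; simp
          rw [heval, hQ i j (by omega), Fp_vanish_Q n α β i j (by omega)]
          ring
    have h2 : toPP h = toPP 0 := by rw [hPP]; simp [toPP]
    exact toPP_injective h2
  have hfc : f = MvPolynomial.C c * Fp n α β := by
    have h3 := sub_eq_zero.mp (hh ▸ hzero)
    linear_combination h3
  have hcne : c ≠ 0 := by
    intro hc0
    apply hf
    rw [hfc, hc0]
    simp
  have hL : MvPolynomial.eval ![(-1 : ℚ), (β : ℚ) + (n : ℚ) + 1] f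
      = c * ((∏ t ∈ range (n-1), ((α:ℚ)+1+t)) * (n.factorial : ℚ)
          * (((n:ℚ)+1)*α - n*β)) := by
    rw [hfc]
    simp only [map_mul, MvPolynomial.eval_C]
    rw [Fp_at_L n α β hn]
  have hMpos : (0:ℚ) < ∏ t ∈ range (n-1), ((α:ℚ)+1+t) := by
    apply Finset.prod_pos
    intro t _
    have h1 : (0:ℚ) ≤ (α:ℚ) := Nat.cast_nonneg α
    have h2 : (0:ℚ) ≤ (t:ℚ) := Nat.cast_nonneg t
    linarith
  rw [hL]
  constructor
  · intro h0
    have hne : c * ((∏ t ∈ range (n-1), ((α:ℚ)+1+t)) * (n.factorial : ℚ)) ≠ 0 := by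
      apply mul_ne_zero hcne
      exact mul_ne_zero (ne_of_gt hMpos) (ne_of_gt hfact)
    have hz : ((n:ℚ)+1)*α - n*β = 0 := by
      by_contra hne2
      have h4 := mul_ne_zero hne hne2
      rw [show c * ((∏ t ∈ range (n-1), ((α:ℚ)+1+t)) * (n.factorial : ℚ)
          * (((n:ℚ)+1)*α - n*β)) = c * ((∏ t ∈ range (n-1), ((α:ℚ)+1+t))
          * (n.factorial : ℚ)) * (((n:ℚ)+1)*α - n*β) from by ring] at h0
      exact h4 h0
    have hcast : ((n*β : ℕ) : ℚ) = (((n+1)*α : ℕ) : ℚ) := by push_cast; linarith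
    exact_mod_cast hcast
  · intro heq
    have hcast : ((n:ℚ)+1)*α - n*β = 0 := by
      have h5 : ((n*β : ℕ) : ℚ) = (((n+1)*α : ℕ) : ℚ) := by exact_mod_cast heq
      push_cast at h5
      linarith
    rw [hcast]
    ring
end

section
/- Let n ≥ 1, α ≥ 1, β ≥ 0 be integers. Let M' be the n×(n+1) matrix over ℚ with rows indexed by i ∈ {0,…,n−1} and columns indexed by j ∈ {0,…,n}, whose (i,j)-entry is C(−α, j)·C(β+i, n−j). Then M' has rank n (i.e., its rows are linearly independent over ℚ). -/
/-- The generalized binomial coefficient `C(z,k) = z(z-1)⋯(z-k+1)/k!` over `ℚ`. -/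
noncomputable def genChoose (z : ℚ) (k : ℕ) : ℚ :=
  (∏ l ∈ Finset.range k, (z - (l : ℚ))) / (Nat.factorial k : ℚ)

open Polynomial in
lemma descPochhammer_eval_eq_prod_range' (x : ℚ) (k : ℕ) :
    (descPochhammer ℚ k).eval x = ∏ l ∈ Finset.range k, (x - (l : ℚ)) := by
  induction k with
  | zero => simp
  | succ k ih =>
    rw [descPochhammer_succ_right, Finset.prod_range_succ, ← ih]
    simp

lemma genChoose_eq_descPochhammer (x : ℚ) (k : ℕ) :
    genChoose x k = (descPochhammer ℚ k).eval x / (Nat.factorial k : ℚ) := by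
  rw [genChoose, descPochhammer_eval_eq_prod_range']

lemma genChoose_neg_ne_zero (α : ℕ) (hα : 1 ≤ α) (j : ℕ) :
    genChoose (-(α : ℚ)) j ≠ 0 := by
  rw [genChoose]
  apply div_ne_zero
  · rw [Finset.prod_ne_zero_iff]
    intro l _
    have : (1 : ℚ) ≤ (α : ℚ) := by exact_mod_cast hα
    have : (0 : ℚ) ≤ (l : ℚ) := by positivity
    intro h
    nlinarith [h]
  · exact_mod_cast Nat.factorial_ne_zero j

/-- the `n × (n+1)` matrix over `ℚ` with `(i,j)`-entry
`C(-α, j)·C(β+i, n-j)` has linearly independent rows (i.e. rank `n`). -/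
theorem Mprime_rows_independent (n α β : ℕ) (hn : 1 ≤ n) (hα : 1 ≤ α) :
    LinearIndependent ℚ
      (fun i : Fin n => fun j : Fin (n + 1) =>
        genChoose (-(α : ℚ)) (j : ℕ) * genChoose ((β : ℚ) + (i : ℕ)) (n - (j : ℕ))) := by
  rw [Fintype.linearIndependent_iff]
  intro g hg
  -- the square matrix with entries `descPochhammer(β+i, k)`
  set v : Fin n → ℚ := fun i => (β : ℚ) + (i : ℕ) with hv
  set M : Matrix (Fin n) (Fin n) ℚ :=
    Matrix.of (fun i k : Fin n => (descPochhammer ℚ (k : ℕ)).eval (v i)) with hM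
  have hdet : M.det ≠ 0 := by
    have h1 : (Matrix.vandermonde v).det = M.det :=
      Matrix.det_eval_matrixOfPolynomials_eq_det_vandermonde v
        (fun k : Fin n => descPochhammer ℚ (k : ℕ))
        (fun k => descPochhammer_natDegree ℚ (k : ℕ)) (fun _ => monic_descPochhammer ℚ _)
    rw [← h1]
    rw [Matrix.det_vandermonde_ne_zero_iff]
    intro a b hab
    have : ((a : ℕ) : ℚ) = ((b : ℕ) : ℚ) := by
      simpa [hv] using hab
    exact Fin.ext (by exact_mod_cast this)
  have key : ∀ k : Fin n, ∑ i : Fin n, g i * M i k = 0 := by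
    intro k
    have hkn : (n : ℕ) - (k : ℕ) ≤ n := Nat.sub_le _ _
    have hklt : (n : ℕ) - (k : ℕ) < n + 1 := Nat.lt_succ_of_le hkn
    set j : Fin (n + 1) := ⟨n - (k : ℕ), hklt⟩ with hj
    have hjk : n - (j : ℕ) = (k : ℕ) := by
      simp only [hj]
      omega
    have h0 := congrFun hg j
    simp only [Finset.sum_apply, Pi.smul_apply, smul_eq_mul, Pi.zero_apply, hjk] at h0
    -- divide by the nonzero factor `genChoose (-α) j`
    have hc : genChoose (-(α : ℚ)) (j : ℕ) ≠ 0 := genChoose_neg_ne_zero α hα _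
    have h1 : ∑ i : Fin n, g i * genChoose ((β : ℚ) + (i : ℕ)) (k : ℕ) = 0 := by
      have h2 : genChoose (-(α : ℚ)) (j : ℕ) *
          ∑ i : Fin n, g i * genChoose ((β : ℚ) + (i : ℕ)) (k : ℕ) = 0 := by
        rw [Finset.mul_sum, ← h0]
        congr 1; ext i; ring
      exact (mul_eq_zero.mp h2).resolve_left hc
    -- multiply by `k!`
    have h3 : ∑ i : Fin n, g i *
        ((descPochhammer ℚ (k : ℕ)).eval (v i) / (Nat.factorial (k : ℕ) : ℚ)) = 0 := by
      simpa [genChoose_eq_descPochhammer, hv] using h1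
    have hfac : (Nat.factorial (k : ℕ) : ℚ) ≠ 0 := by
      exact_mod_cast Nat.factorial_ne_zero _
    have h4 : (∑ i : Fin n, g i * (descPochhammer ℚ (k : ℕ)).eval (v i)) /
        (Nat.factorial (k : ℕ) : ℚ) = 0 := by
      rw [Finset.sum_div, ← h3]
      congr 1; ext i; ring
    have := (div_eq_zero_iff.mp h4).resolve_right hfac
    simpa [hM] using this
  have : Matrix.vecMul g M = 0 := by
    funext k
    simpa [Matrix.vecMul, dotProduct] using key k
  have hg0 := Matrix.eq_zero_of_vecMul_eq_zero hdet this
  intro i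
  exact congrFun hg0 i
end
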